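/- arXiv:1006.5704 — 8 statements merged into one kernel-verified Lean document; each statement's English description precedes it below -/
import Mathlib

section
/- Let r and s be integers with r ≥ 2 and s ≥ 2, and let P be a finite (𝐫+𝐬)-free poset. Then there exists a function I assigning to each element x ∈ P a non-empty set I(x) of consecutive integers such that: (1) for every integer k, the set {x ∈ P : k ∈ I(x)} induces a subposet of height at most r−1; and (2) whenever x and y are incomparable in P, either I(x) and I(y) have non-empty intersection, or at most s−2 integers lie strictly between I(x) and I(y) (i.e., strictly greater than every element of one of the sets and strictly less than every element of the other). -/
/-- **Structural lemma for `(𝐫+𝐬)`-free posets.**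
Let `r, s ≥ 2` and let `P` (the finite partial order `α`) be `(𝐫+𝐬)`-free.  Then there is a
function `I` assigning to each element `x` a non-empty set of consecutive integers such that:
(1) for each integer `k`, the set `{x | k ∈ I x}` induces a subposet of height at most `r - 1`
(every chain it contains has size at most `r - 1`); and
(2) if `x` and `y` are incomparable, then either `I x` and `I y` intersect, or at most `s - 2`
integers lie strictly between `I x` and `I y`. -/
theorem exists_interval_function_of_two_long_incomparable_chains_free
    {α : Type*} [PartialOrder α] [Fintype α]
    (r s : ℕ) (hr : 2 ≤ r) (hs : 2 ≤ s)
    -- `P` is `(𝐫 + 𝐬)`-free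
    (hfree : ¬ ∃ A B : Finset α, A.card = r ∧ B.card = s ∧ Disjoint A B ∧
      IsChain (· ≤ ·) (A : Set α) ∧ IsChain (· ≤ ·) (B : Set α) ∧
      ∀ a ∈ A, ∀ b ∈ B, ¬ a ≤ b ∧ ¬ b ≤ a) :
    ∃ I : α → Finset ℤ,
      -- each `I x` is a non-empty set of consecutive integers
      (∀ x, (I x).Nonempty) ∧
      (∀ x, ∃ a b : ℤ, I x = Finset.Icc a b) ∧
      -- (1) for each `k`, the set `{x | k ∈ I x}` has height at most `r - 1`
      (∀ k : ℤ, ∀ c : Finset α, (∀ x ∈ c, k ∈ I x) →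
        IsChain (· ≤ ·) (c : Set α) → c.card ≤ r - 1) ∧
      -- (2) incomparable elements have intersecting intervals, or at most `s - 2`
      -- integers strictly between their intervals
      (∀ x y : α, ¬ x ≤ y → ¬ y ≤ x →
        (I x ∩ I y).Nonempty ∨
        Set.ncard {k : ℤ |
          ((∀ a ∈ I x, a < k) ∧ (∀ b ∈ I y, k < b)) ∨
          ((∀ b ∈ I y, b < k) ∧ (∀ a ∈ I x, k < a))} ≤ s - 2) := by
  classical
  obtain ⟨R, rfl⟩ : ∃ R, r = R + 2 := ⟨r - 2, by omega⟩
  obtain ⟨S, rfl⟩ : ∃ S, s = S + 2 := ⟨s - 2, by omega⟩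
  -- heights are finite
  have hfin : ∀ x : α, Order.height x ≠ ⊤ := by
    intro x
    have h1 : Order.height x ≤ (Fintype.card α : ℕ∞) :=
      Order.height_le fun p _ => by exact_mod_cast p.length_lt_card.le
    exact ne_top_of_le_ne_top (WithTop.coe_ne_top) h1
  set e : α → ℕ := fun x => (Order.height x).toNat with he
  have he_lt : ∀ {x y : α}, x < y → e x < e y := by
    intro x y hxy
    have h2 : Order.height x < Order.height y :=
      Order.height_strictMono hxy (lt_of_le_of_ne le_top (hfin x))
    have h3 : ((e x : ℕ∞)) < (e y : ℕ∞) := by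
      simp only [he]
      rw [ENat.coe_toNat (hfin x), ENat.coe_toNat (hfin y)]
      exact h2
    exact_mod_cast h3
  set lo : α → ℕ := fun x => e x / (R + 1) with hlo
  set W : α → Finset α := fun x => Finset.univ.filter fun y => ¬x ≤ y ∧ ¬y ≤ x with hW
  set hi : α → ℕ := fun x => max (lo x) ((W x).sup lo - (S + 1)) with hhi
  have hlohi : ∀ x, lo x ≤ hi x := fun x => le_max_left _ _
  refine ⟨fun x => Finset.Icc (lo x : ℤ) (hi x : ℤ), ?_, ?_, ?_, ?_⟩
  · intro x
    exact Finset.nonempty_Icc.mpr (by exact_mod_cast hlohi x)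
  · intro x
    exact ⟨_, _, rfl⟩
  · -- condition (1)
    intro k c hk hchain
    by_contra hcon
    have hm : R + 2 ≤ c.card := by omega
    have hc0 : ∃ c0 ∈ c, ∀ x ∈ c, c0 ≤ x := by
      have hne : c.Nonempty := Finset.card_pos.mp (by omega)
      obtain ⟨c0, hc0m, hmin⟩ := c.exists_minimal hne
      refine ⟨c0, hc0m, fun x hx => ?_⟩
      rcases eq_or_ne x c0 with rfl | hne'
      · exact le_rfl
      · rcases hchain hc0m hx (Ne.symm hne') with h | h
        · exact h
        · exact absurd (lt_of_le_of_ne h hne') (fun hlt => hlt.not_ge (hmin hx hlt.le))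
    obtain ⟨c0, hc0m, hc0min⟩ := hc0
    -- k is nonnegative
    have hk0 := Finset.mem_Icc.mp (hk c0 hc0m)
    have hknn : 0 ≤ k := le_trans (by positivity) hk0.1
    set K := k.toNat with hK
    have hKk : (K : ℤ) = k := Int.toNat_of_nonneg hknn
    have hloK : ∀ x ∈ c, lo x ≤ K := by
      intro x hx
      have := (Finset.mem_Icc.mp (hk x hx)).1
      omega
    have hhiK : ∀ x ∈ c, K ≤ hi x := by
      intro x hx
      have := (Finset.mem_Icc.mp (hk x hx)).2
      omega
    -- upper bound on heights at level K
    have he_ub : ∀ x ∈ c, e x ≤ K * (R + 1) + R := by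
      intro x hx
      by_contra hcontra
      push_neg at hcontra
      have hexp : (K + 1) * (R + 1) = K * (R + 1) + R + 1 := by ring
      have h1 : (K + 1) * (R + 1) ≤ e x := by omega
      have h2 : K + 1 ≤ lo x := (Nat.le_div_iff_mul_le (by omega)).mpr h1
      have h3 := hloK x hx
      omega
    -- the bottom of the chain has small height
    have hec0 : e c0 + 1 ≤ K * (R + 1) := by
      have hinj : Set.InjOn e (c : Set α) := by
        intro x hx y hy hexy
        by_contra hne
        rcases hchain hx hy hne with h | h
        · exact absurd hexy (Nat.ne_of_lt (he_lt (lt_of_le_of_ne h hne)))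
        · exact absurd hexy.symm (Nat.ne_of_lt (he_lt (lt_of_le_of_ne h (Ne.symm hne))))
      have hsub : c.image e ⊆ Finset.Icc (e c0) (K * (R + 1) + R) := by
        intro n hn
        obtain ⟨x, hx, rfl⟩ := Finset.mem_image.mp hn
        rcases eq_or_ne x c0 with rfl | hne'
        · exact Finset.mem_Icc.mpr ⟨le_rfl, he_ub _ hx⟩
        · refine Finset.mem_Icc.mpr ⟨?_, he_ub _ hx⟩
          exact (he_lt (lt_of_le_of_ne (hc0min x hx) (Ne.symm hne'))).le
      have hcard1 : c.card = (c.image e).card := (Finset.card_image_of_injOn hinj).symm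
      have hcard2 : (c.image e).card ≤ (Finset.Icc (e c0) (K * (R + 1) + R)).card :=
        Finset.card_le_card hsub
      rw [Nat.card_Icc] at hcard2
      omega
    have hloc0 : lo c0 < K := by
      have h1 : e c0 < K * (R + 1) := by omega
      exact (Nat.div_lt_iff_lt_mul (by omega)).mpr h1
    -- a witness incomparable to `c0` of large height
    have hsup : K + S + 1 ≤ (W c0).sup lo := by
      have h1 := hhiK c0 hc0m
      simp only [hhi, le_max_iff] at h1
      rcases h1 with h1 | h1
      · omega
      · omega
    obtain ⟨y, hyW, hyl⟩ := Finset.le_sup_iff (show (⊥ : ℕ) < K + S + 1 from Nat.succ_pos _)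
      |>.mp hsup
    have hyinc : ¬c0 ≤ y ∧ ¬y ≤ c0 := by
      have h := hyW
      simp only [hW, Finset.mem_filter, Finset.mem_univ, true_and] at h
      exact h
    have hey : (K + S + 1) * (R + 1) ≤ e y :=
      (Nat.le_div_iff_mul_le (by omega)).mp hyl
    -- a long chain ending at y
    have heyh : ((e y : ℕ∞)) ≤ Order.height y := by
      simp only [he]
      rw [ENat.coe_toNat (hfin y)]
    obtain ⟨p, hplast, hplen⟩ := Order.exists_series_of_le_height y heyh
    have hJS : K * (R + 1) + R + S + 1 ≤ e y := by
      have hexp : (K + S + 1) * (R + 1) = K * (R + 1) + S * R + S + R + 1 := by ring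
      omega
    have hplen' : K * (R + 1) + R + S + 1 ≤ p.length := by omega
    set J := K * (R + 1) + R with hJ
    set q : ℕ → α := fun j => p ⟨min j p.length, by omega⟩ with hq
    have hq_le_y : ∀ j, q j ≤ y := by
      intro j
      have h : q j ≤ p.last :=
        p.strictMono.monotone (Fin.le_last (⟨min j p.length, by omega⟩ : Fin (p.length + 1)))
      rwa [hplast] at h
    have hq_height : ∀ j ≤ p.length, j ≤ e (q j) := by
      intro j hj
      have h2 : ((min j p.length : ℕ) : ℕ∞) ≤ Order.height (q j) :=
        Order.index_le_height p ⟨min j p.length, by omega⟩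
      rw [Nat.min_eq_left hj] at h2
      have h3 := ENat.toNat_le_toNat h2 (hfin (q j))
      simpa using h3
    have hq_inj : ∀ j1 ≤ p.length, ∀ j2 ≤ p.length, q j1 = q j2 → j1 = j2 := by
      intro j1 h1 j2 h2 hq12
      have h := congrArg Fin.val (p.strictMono.injective hq12)
      simpa [Nat.min_eq_left h1, Nat.min_eq_left h2] using h
    set B := (Finset.Icc J (J + S + 1)).image q with hB
    have hBcard : B.card = S + 2 := by
      rw [hB, Finset.card_image_of_injOn, Nat.card_Icc]
      · omega
      · intro j1 h1 j2 h2 h12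
        rw [Finset.mem_coe, Finset.mem_Icc] at h1 h2
        exact hq_inj j1 (by omega) j2 (by omega) h12
    -- every element of B is incomparable with every element of c
    have hBinc : ∀ a ∈ c, ∀ b ∈ B, ¬a ≤ b ∧ ¬b ≤ a := by
      intro a ha b hb
      rw [hB, Finset.mem_image] at hb
      obtain ⟨j, hj, rfl⟩ := hb
      rw [Finset.mem_Icc] at hj
      constructor
      · intro hab
        exact hyinc.1 (le_trans (hc0min a ha) (le_trans hab (hq_le_y j)))
      · intro hba
        rcases eq_or_ne (q j) a with heq | hne
        · exact hyinc.1 (le_trans (hc0min a ha) (heq ▸ hq_le_y j))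
        · have h1 : e (q j) < e a := he_lt (lt_of_le_of_ne hba hne)
          have h2 : J ≤ e (q j) := le_trans hj.1 (hq_height j (by omega))
          have h3 := he_ub a ha
          omega
    -- extract an (R+2)-subchain of c
    obtain ⟨A, hAsub, hAcard⟩ := Finset.exists_subset_card_eq hm
    refine hfree ⟨A, B, hAcard, hBcard, ?_, ?_, ?_, ?_⟩
    · rw [Finset.disjoint_left]
      intro a haA haB
      exact (hBinc a (hAsub haA) a haB).1 le_rfl
    · exact hchain.mono (Finset.coe_subset.mpr hAsub)
    · intro b1 hb1 b2 hb2 hne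
      rw [Finset.mem_coe, hB, Finset.mem_image] at hb1 hb2
      obtain ⟨j1, hj1, rfl⟩ := hb1
      obtain ⟨j2, hj2, rfl⟩ := hb2
      rcases le_total j1 j2 with h | h
      · exact Or.inl (p.strictMono.monotone (by
          simp only [Fin.mk_le_mk]; exact min_le_min_right _ h))
      · exact Or.inr (p.strictMono.monotone (by
          simp only [Fin.mk_le_mk]; exact min_le_min_right _ h))
    · intro a haA b hbB
      exact hBinc a (hAsub haA) b hbB
  · -- condition (2)
    intro x y hxy hyx
    dsimp only
    have hyW : y ∈ W x := by
      simp only [hW, Finset.mem_filter, Finset.mem_univ, true_and]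
      exact ⟨hxy, hyx⟩
    have hxW : x ∈ W y := by
      simp only [hW, Finset.mem_filter, Finset.mem_univ, true_and]
      exact ⟨hyx, hxy⟩
    have hxy2 : lo y ≤ hi x + (S + 1) := by
      have h1 : lo y ≤ (W x).sup lo := Finset.le_sup hyW
      have h2 : (W x).sup lo - (S + 1) ≤ hi x := le_max_right _ _
      omega
    have hyx2 : lo x ≤ hi y + (S + 1) := by
      have h1 : lo x ≤ (W y).sup lo := Finset.le_sup hxW
      have h2 : (W y).sup lo - (S + 1) ≤ hi y := le_max_right _ _
      omega
    by_cases hint : lo y ≤ hi x ∧ lo x ≤ hi y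
    · left
      refine ⟨((max (lo x) (lo y) : ℕ) : ℤ), ?_⟩
      rw [Finset.mem_inter, Finset.mem_Icc, Finset.mem_Icc]
      have h1 := hlohi x
      have h2 := hlohi y
      push_cast
      omega
    · right
      rw [not_and_or, not_le, not_le] at hint
      have hGeq : {k : ℤ |
          ((∀ a ∈ Finset.Icc (lo x : ℤ) (hi x : ℤ), a < k) ∧
            (∀ b ∈ Finset.Icc (lo y : ℤ) (hi y : ℤ), k < b)) ∨
          ((∀ b ∈ Finset.Icc (lo y : ℤ) (hi y : ℤ), b < k) ∧
            (∀ a ∈ Finset.Icc (lo x : ℤ) (hi x : ℤ), k < a))} =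
          if (hi x : ℕ) < lo y then ↑(Finset.Ioo (hi x : ℤ) (lo y : ℤ))
            else ↑(Finset.Ioo (hi y : ℤ) (lo x : ℤ)) := by
        have h1 := hlohi x
        have h2 := hlohi y
        ext k
        have hmx : (hi x : ℤ) ∈ Finset.Icc (lo x : ℤ) (hi x : ℤ) := by
          rw [Finset.mem_Icc]; exact ⟨by exact_mod_cast h1, le_rfl⟩
        have hmx' : (lo x : ℤ) ∈ Finset.Icc (lo x : ℤ) (hi x : ℤ) := by
          rw [Finset.mem_Icc]; exact ⟨le_rfl, by exact_mod_cast h1⟩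
        have hmy : (hi y : ℤ) ∈ Finset.Icc (lo y : ℤ) (hi y : ℤ) := by
          rw [Finset.mem_Icc]; exact ⟨by exact_mod_cast h2, le_rfl⟩
        have hmy' : (lo y : ℤ) ∈ Finset.Icc (lo y : ℤ) (hi y : ℤ) := by
          rw [Finset.mem_Icc]; exact ⟨le_rfl, by exact_mod_cast h2⟩
        by_cases hcase : (hi x : ℕ) < lo y
        · simp only [hcase, if_pos, Set.mem_setOf_eq, Finset.coe_Ioo, Set.mem_Ioo]
          constructor
          · rintro (⟨ha, hb⟩ | ⟨hb, ha⟩)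
            · exact ⟨ha _ hmx, hb _ hmy'⟩
            · have hb' := hb _ hmy
              have ha' := ha _ hmx'
              have hc : (hi x : ℤ) < (lo y : ℤ) := by exact_mod_cast hcase
              omega
          · rintro ⟨hk1, hk2⟩
            left
            constructor
            · intro a haa
              rw [Finset.mem_Icc] at haa
              omega
            · intro b hbb
              rw [Finset.mem_Icc] at hbb
              omega
        · simp only [hcase, if_neg, Set.mem_setOf_eq, Finset.coe_Ioo, Set.mem_Ioo,
            not_false_eq_true]
          have hcase2 : (hi y : ℕ) < lo x := by
            rcases hint with h | h
            · omega
            · exact h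
          constructor
          · rintro (⟨ha, hb⟩ | ⟨hb, ha⟩)
            · have ha' := ha _ hmx
              have hb' := hb _ hmy'
              have hc : (hi y : ℤ) < (lo x : ℤ) := by exact_mod_cast hcase2
              omega
            · exact ⟨hb _ hmy, ha _ hmx'⟩
          · rintro ⟨hk1, hk2⟩
            right
            constructor
            · intro b hbb
              rw [Finset.mem_Icc] at hbb
              omega
            · intro a haa
              rw [Finset.mem_Icc] at haa
              omega
      rw [hGeq]
      by_cases hcase : (hi x : ℕ) < lo y
      · rw [if_pos hcase, Set.ncard_coe_finset, Int.card_Ioo]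
        omega
      · rw [if_neg hcase, Set.ncard_coe_finset, Int.card_Ioo]
        have hcase2 : (hi y : ℕ) < lo x := by
          rcases hint with h | h
          · omega
          · exact h
        omega
end

section
/- Fix an evolution (S_0,F_0), …, (S_n,F_n) of t-societies with S_n = ∅. Let Y_1, …, Y_q be groups and let [a_1,b_1], …, [a_q,b_q] be pairwise disjoint intervals with integer endpoints contained in [0,n] such that a_j ≤ b_j and, for each j, b_j is the largest index l with Y_j ∈ S_l. Then Σ_{j=1}^q N^α_{a_j,b_j}(Y_j) ≤ ε·n. -/
open scoped Classical

/-- `X` makes a transition of type α from `S (j-1)` to `S j`: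
`X` belongs to `S (j-1)` and has non-empty intersection with the chain `C j`. -/
def TransAlpha {α : Type*} (S : ℕ → Set (Set α)) (C : ℕ → Set α)
    (j : ℕ) (X : Set α) : Prop :=
  X ∈ S (j - 1) ∧ (X ∩ C j).Nonempty

/-- `X` makes a transition of type β from `S (j-1)` to `S j`:
condition α fails, but some friend of `X` in the `t`-society `(S (j-1), F (j-1))`
has non-empty intersection with `C j`. -/
def TransBeta {α : Type*} (S : ℕ → Set (Set α)) (F : ℕ → Set α → ℕ → Option (Set α))
    (C : ℕ → Set α) (t j : ℕ) (X : Set α) : Prop :=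
  X ∈ S (j - 1) ∧ ¬ (X ∩ C j).Nonempty ∧
    ∃ k < t, ∃ Y, F (j - 1) X k = some Y ∧ (Y ∩ C j).Nonempty

/-- `N^α_{i,j}(X)`: the number of indices `l` with `i < l ≤ j` such that `X` makes a
transition of type α from `S (l-1)` to `S l`. -/
noncomputable def NAlpha {α : Type*} (S : ℕ → Set (Set α)) (C : ℕ → Set α)
    (i j : ℕ) (X : Set α) : ℕ :=
  ((Finset.Ioc i j).filter fun l => TransAlpha S C l X).card

/-- `X` makes a transition of type γ from `S (j-1)` to `S j`:
conditions α and β fail, but there is `i ≤ j - 1` with `N^α_{i,j-1}(X) > ε (j - i)`,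
where `ε = 1 / (2 t)`. -/
def TransGamma {α : Type*} (S : ℕ → Set (Set α)) (F : ℕ → Set α → ℕ → Option (Set α))
    (C : ℕ → Set α) (t j : ℕ) (X : Set α) : Prop :=
  X ∈ S (j - 1) ∧ ¬ (X ∩ C j).Nonempty ∧
    ¬ (∃ k < t, ∃ Y, F (j - 1) X k = some Y ∧ (Y ∩ C j).Nonempty) ∧
    ∃ i ≤ j - 1, (NAlpha S C i (j - 1) X : ℝ) > (1 / (2 * (t : ℝ))) * ((j : ℝ) - (i : ℝ))

/-- `N^β_{i,j}(X)`: the number of indices `l` with `i < l ≤ j` such that `X` makes a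
transition of type β from `S (l-1)` to `S l`. -/
noncomputable def NBeta {α : Type*} (S : ℕ → Set (Set α)) (F : ℕ → Set α → ℕ → Option (Set α))
    (C : ℕ → Set α) (t i j : ℕ) (X : Set α) : ℕ :=
  ((Finset.Ioc i j).filter fun l => TransBeta S F C t l X).card

/-- `N^γ_{i,j}(X)`: the number of indices `l` with `i < l ≤ j` such that `X` makes a
transition of type γ from `S (l-1)` to `S l`. -/
noncomputable def NGamma {α : Type*} (S : ℕ → Set (Set α)) (F : ℕ → Set α → ℕ → Option (Set α))
    (C : ℕ → Set α) (t i j : ℕ) (X : Set α) : ℕ :=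
  ((Finset.Ioc i j).filter fun l => TransGamma S F C t l X).card

/-- **Lemma 1 (single column).**  Fix an evolution `(S 0, F 0), …, (S n, F n)` of
`t`-societies with `S n = ∅`.  Let `Y 1, …, Y q` be groups and `[a j, b j]` pairwise
disjoint intervals with integer endpoints in `[0, n]` such that `b j` is the largest
index `l` with `Y j ∈ S l`.  Then `∑ j, N^α_{a j, b j} (Y j) ≤ ε * n`, where `ε = 1/(2t)`. -/
theorem sum_NAlpha_le_eps_mul
    {α : Type*} [PartialOrder α]
    (n t : ℕ) (ht : 0 < t)
    (S : ℕ → Set (Set α)) (F : ℕ → Set α → ℕ → Option (Set α)) (C : ℕ → Set α)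
    -- the `C j` (for `j ≥ 1`) are pairwise disjoint (possibly empty) chains of `P`
    (hCchain : ∀ j, 1 ≤ j → IsChain (· ≤ ·) (C j))
    (hCdisj : ∀ i j, 1 ≤ i → 1 ≤ j → i ≠ j → Disjoint (C i) (C j))
    -- each `S j` is a finite set of groups
    (hSfin : ∀ j, j ≤ n → (S j).Finite)
    -- the societies decrease: `S 0 ⊇ S 1 ⊇ ⋯ ⊇ S n`
    (hSmono : ∀ j, 1 ≤ j → j ≤ n → S j ⊆ S (j - 1))
    -- each friend of a group of `S j` is a group of `S j`
    (hFmem : ∀ j, j ≤ n → ∀ X ∈ S j, ∀ k < t, ∀ Y, F j X k = some Y → Y ∈ S j)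
    -- a group of `S (j-1)` survives to `S j` iff it makes a transition of type α, β or γ
    (hrule : ∀ j, 1 ≤ j → j ≤ n → ∀ X ∈ S (j - 1),
      (X ∈ S j ↔ TransAlpha S C j X ∨ TransBeta S F C t j X ∨ TransGamma S F C t j X))
    -- friendship is a lifetime commitment
    (hlife : ∀ j, 1 ≤ j → j ≤ n → ∀ X Y : Set α, ∀ k < t,
      F (j - 1) X k = some Y → X ∈ S j → Y ∈ S j → F j X k = some Y)
    -- the evolution ends with the empty society
    (hSn : S n = ∅)
    -- the groups `Y j` and the intervals `[a j, b j]`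
    (q : ℕ) (Y : Fin q → Set α) (a b : Fin q → ℕ)
    (hab : ∀ j, a j ≤ b j) (hbn : ∀ j, b j ≤ n)
    (hIdisj : ∀ j₁ j₂, j₁ ≠ j₂ →
      Disjoint (Finset.Icc (a j₁) (b j₁)) (Finset.Icc (a j₂) (b j₂)))
    -- `b j` is the largest index `l ∈ [0, n]` with `Y j ∈ S l`
    (hblast : ∀ j, Y j ∈ S (b j) ∧ ∀ l, l ≤ n → Y j ∈ S l → l ≤ b j) :
    (∑ j, (NAlpha S C (a j) (b j) (Y j) : ℝ)) ≤ (1 / (2 * (t : ℝ))) * n := by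
  have hε0 : (0:ℝ) ≤ 1 / (2 * (t : ℝ)) := by positivity
  have hbn' : ∀ j, b j < n := by
    intro j
    rcases lt_or_eq_of_le (hbn j) with h | h
    · exact h
    · exfalso
      have := (hblast j).1
      rw [h, hSn] at this
      exact this
  have key : ∀ j, (NAlpha S C (a j) (b j) (Y j) : ℝ) ≤
      (1 / (2 * (t : ℝ))) * ((Finset.Icc (a j) (b j)).card : ℝ) := by
    intro j
    have hm := hbn' j
    have h1 : 1 ≤ b j + 1 := by omega
    have hmn : b j + 1 ≤ n := by omega
    have hmem : Y j ∈ S ((b j + 1) - 1) := by simpa using (hblast j).1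
    have hnotmem : Y j ∉ S (b j + 1) := by
      intro h
      have := (hblast j).2 (b j + 1) hmn h
      omega
    have hr := hrule (b j + 1) h1 hmn (Y j) hmem
    have hno : ¬(TransAlpha S C (b j + 1) (Y j) ∨ TransBeta S F C t (b j + 1) (Y j) ∨
        TransGamma S F C t (b j + 1) (Y j)) := fun h => hnotmem (hr.mpr h)
    push_neg at hno
    obtain ⟨hna, hnb, hng⟩ := hno
    have hA : ¬ ((Y j) ∩ C (b j + 1)).Nonempty := fun h => hna ⟨by simpa using hmem, h⟩
    have hB : ¬ ∃ k < t, ∃ Z, F ((b j + 1) - 1) (Y j) k = some Z ∧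
        (Z ∩ C (b j + 1)).Nonempty := fun h => hnb ⟨by simpa using hmem, hA, h⟩
    have hG : ¬ ∃ i ≤ (b j + 1) - 1, (NAlpha S C i ((b j + 1) - 1) (Y j) : ℝ) >
        (1 / (2 * (t : ℝ))) * (((b j + 1 : ℕ) : ℝ) - (i : ℝ)) :=
      fun h => hng ⟨by simpa using hmem, hA, hB, h⟩
    push_neg at hG
    have hGa := hG (a j) (by simpa using hab j)
    simp only [Nat.add_sub_cancel] at hGa
    have hcard : ((Finset.Icc (a j) (b j)).card : ℝ) = ((b j : ℝ) + 1 - (a j : ℝ)) := by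
      rw [Nat.card_Icc, Nat.cast_sub (by have := hab j; omega)]
      push_cast
      ring
    rw [hcard]
    have : (((b j + 1 : ℕ) : ℝ) - (a j : ℝ)) = ((b j : ℝ) + 1 - (a j : ℝ)) := by
      push_cast; ring
    rw [this] at hGa
    exact hGa
  have hsumcard : (∑ j, ((Finset.Icc (a j) (b j)).card : ℝ)) ≤ (n : ℝ) := by
    rcases Nat.eq_zero_or_pos q with hq | hq
    · subst hq
      simp
    · have hn1 : 1 ≤ n := by
        have := hbn' ⟨0, hq⟩
        omega
      have hnat : (∑ j, (Finset.Icc (a j) (b j)).card) ≤ n := by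
        have hdisj : ∀ x ∈ (Finset.univ : Finset (Fin q)), ∀ y ∈ (Finset.univ : Finset (Fin q)),
            x ≠ y → Disjoint (Finset.Icc (a x) (b x)) (Finset.Icc (a y) (b y)) :=
          fun x _ y _ hxy => hIdisj x y hxy
        calc (∑ j, (Finset.Icc (a j) (b j)).card)
            = (Finset.univ.biUnion fun j => Finset.Icc (a j) (b j)).card :=
              (Finset.card_biUnion hdisj).symm
          _ ≤ (Finset.Icc 0 (n - 1)).card := by
              apply Finset.card_le_card
              intro l hl
              simp only [Finset.mem_biUnion, Finset.mem_Icc] at hl ⊢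
              obtain ⟨j, _, hal, hlb⟩ := hl
              have := hbn' j
              omega
          _ = n := by rw [Nat.card_Icc]; omega
      calc (∑ j, ((Finset.Icc (a j) (b j)).card : ℝ))
          = ((∑ j, (Finset.Icc (a j) (b j)).card : ℕ) : ℝ) := by push_cast; ring
        _ ≤ (n : ℝ) := by exact_mod_cast hnat
  calc (∑ j, (NAlpha S C (a j) (b j) (Y j) : ℝ))
      ≤ ∑ j, (1 / (2 * (t : ℝ))) * ((Finset.Icc (a j) (b j)).card : ℝ) :=
        Finset.sum_le_sum fun j _ => key j
    _ = (1 / (2 * (t : ℝ))) * ∑ j, ((Finset.Icc (a j) (b j)).card : ℝ) := by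
        rw [Finset.mul_sum]
    _ ≤ (1 / (2 * (t : ℝ))) * (n : ℝ) := mul_le_mul_of_nonneg_left hsumcard hε0
end

section
/- Fix an evolution (S_0,F_0), …, (S_n,F_n) of t-societies with n ≥ 1 and S_n = ∅. If X ∈ S_{n−1}, then N^β_{0,n−1}(X) ≤ t·ε·n. -/
open scoped Classical

/-- **Lemma 2 (few β-transitions).**  Fix an evolution `(S 0, F 0), …, (S n, F n)` of
`t`-societies with `n ≥ 1` and `S n = ∅`.  If `X ∈ S (n-1)`, then
`N^β_{0,n-1}(X) ≤ t * ε * n`, where `ε = 1/(2t)`. -/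
theorem NBeta_le_of_mem_penultimate
    {α : Type*} [PartialOrder α]
    (n t : ℕ) (hn : 1 ≤ n) (ht : 0 < t)
    (S : ℕ → Set (Set α)) (F : ℕ → Set α → ℕ → Option (Set α)) (C : ℕ → Set α)
    -- the `C j` (for `j ≥ 1`) are pairwise disjoint (possibly empty) chains of `P`
    (hCchain : ∀ j, 1 ≤ j → IsChain (· ≤ ·) (C j))
    (hCdisj : ∀ i j, 1 ≤ i → 1 ≤ j → i ≠ j → Disjoint (C i) (C j))
    -- each `S j` is a finite set of groups
    (hSfin : ∀ j, j ≤ n → (S j).Finite)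
    -- the societies decrease: `S 0 ⊇ S 1 ⊇ ⋯ ⊇ S n`
    (hSmono : ∀ j, 1 ≤ j → j ≤ n → S j ⊆ S (j - 1))
    -- each friend of a group of `S j` is a group of `S j`
    (hFmem : ∀ j, j ≤ n → ∀ X ∈ S j, ∀ k < t, ∀ Y, F j X k = some Y → Y ∈ S j)
    -- a group of `S (j-1)` survives to `S j` iff it makes a transition of type α, β or γ
    (hrule : ∀ j, 1 ≤ j → j ≤ n → ∀ X ∈ S (j - 1),
      (X ∈ S j ↔ TransAlpha S C j X ∨ TransBeta S F C t j X ∨ TransGamma S F C t j X))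
    -- friendship is a lifetime commitment
    (hlife : ∀ j, 1 ≤ j → j ≤ n → ∀ X Y : Set α, ∀ k < t,
      F (j - 1) X k = some Y → X ∈ S j → Y ∈ S j → F j X k = some Y)
    -- the evolution ends with the empty society
    (hSn : S n = ∅)
    (X : Set α) (hX : X ∈ S (n - 1)) :
    (NBeta S F C t 0 (n - 1) X : ℝ) ≤ (t : ℝ) * (1 / (2 * (t : ℝ))) * n := by
    classical
  have htR : (0:ℝ) < t := by exact_mod_cast ht
  have hεpos : (0:ℝ) < 1 / (2 * (t:ℝ)) := by positivity
  -- monotonicity of societies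
  have hmono : ∀ j, j ≤ n → ∀ i ≤ j, S j ⊆ S i := by
    intro j
    induction j with
    | zero => intro _ i hi; simp [Nat.le_zero.mp hi]
    | succ m ih =>
      intro hjn i hi
      rcases Nat.lt_or_ge i (m+1) with h | h
      · have h1 : S (m+1) ⊆ S m := by simpa using hSmono (m+1) (by omega) hjn
        exact fun Z hZ => ih (by omega) i (by omega) (h1 hZ)
      · have : i = m + 1 := le_antisymm hi h
        subst this; exact fun Z hZ => hZ
  have hXall : ∀ j, j ≤ n - 1 → X ∈ S j := fun j hj => hmono (n-1) (by omega) j hj hX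
  -- death times
  have hnotn : ∀ Y : Set α, Y ∉ S n := by intro Y h; rw [hSn] at h; exact h
  have hdex : ∀ Y : Set α, ∃ m, Y ∉ S m := fun Y => ⟨n, hnotn Y⟩
  set d : Set α → ℕ := fun Y => Nat.find (hdex Y) with hdDef
  have hd1 : ∀ Y, Y ∉ S (d Y) := fun Y => Nat.find_spec (hdex Y)
  have hd2 : ∀ Y, ∀ j, j < d Y → Y ∈ S j := by
    intro Y j hj
    by_contra h
    have hle : d Y ≤ j := Nat.find_le h
    omega
  have hd3 : ∀ Y, d Y ≤ n := fun Y => Nat.find_le (hnotn Y)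
  have hdgt : ∀ Y, ∀ j, j ≤ n → Y ∈ S j → j < d Y := by
    intro Y j hjn hY
    by_contra h
    push_neg at h
    exact hd1 Y (hmono j hjn (d Y) h hY)
  -- at death, no γ-condition: bound on α-transitions
  have hdeath : ∀ Y : Set α, 1 ≤ d Y → ∀ i ≤ d Y - 1,
      (NAlpha S C i (d Y - 1) Y : ℝ) ≤ (1 / (2 * (t:ℝ))) * ((d Y : ℝ) - (i : ℝ)) := by
    intro Y h1 i hi
    have hmem : Y ∈ S (d Y - 1) := hd2 Y _ (by omega)
    have hnot : Y ∉ S (d Y) := hd1 Y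
    rw [hrule (d Y) h1 (hd3 Y) Y hmem] at hnot
    push_neg at hnot
    obtain ⟨hnA, hnB, hnG⟩ := hnot
    by_contra hgt
    push_neg at hgt
    have hnC : ¬ (Y ∩ C (d Y)).Nonempty := fun hne => hnA ⟨hmem, hne⟩
    exact hnG ⟨hmem, hnC, fun hB => hnB ⟨hmem, hnC, hB⟩, ⟨i, hi, hgt⟩⟩
  -- per-slot bound
  have hkey : ∀ k, k < t → (((Finset.Ioc 0 (n-1)).filter fun l =>
      TransBeta S F C t l X ∧ ∃ Y, F (l-1) X k = some Y ∧ (Y ∩ C l).Nonempty).card : ℝ)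
      ≤ (1 / (2 * (t:ℝ))) * n := by
    intro k hkt
    set Bk := (Finset.Ioc 0 (n-1)).filter (fun l =>
      TransBeta S F C t l X ∧ ∃ Y, F (l-1) X k = some Y ∧ (Y ∩ C l).Nonempty) with hBkDef
    set Yof : ℕ → Set α := fun l => (F (l-1) X k).getD ∅ with hYofDef
    set T := Bk.image Yof with hTDef
    -- persistence of friendship in slot k
    have hpers : ∀ (Y : Set α) (j0 j : ℕ), F j0 X k = some Y → j0 ≤ j → j < d Y → j ≤ n - 1 →
        F j X k = some Y := by
      intro Y j0 j h0
      induction j with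
      | zero =>
        intro hj0 _ _
        have : j0 = 0 := Nat.le_zero.mp hj0
        rw [this] at h0; exact h0
      | succ m ih =>
        intro hj0 hjd hjn
        rcases Nat.lt_or_ge j0 (m+1) with h | h
        · have hm : F m X k = some Y := ih (by omega) (by omega) (by omega)
          exact hlife (m+1) (by omega) (by omega) X Y k hkt (by simpa using hm)
            (hXall (m+1) hjn) (hd2 Y (m+1) hjd)
        · have : j0 = m + 1 := le_antisymm hj0 h
          rw [this] at h0; exact h0
    -- appointment times
    set a : Set α → ℕ := fun Y => if h : ∃ j, F j X k = some Y then Nat.find h else 0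
      with haDef
    have ha1 : ∀ Y, ∀ (h : ∃ j, F j X k = some Y), F (a Y) X k = some Y := by
      intro Y h
      simp only [haDef, dif_pos h]
      exact Nat.find_spec h
    have ha2 : ∀ Y, ∀ j, F j X k = some Y → a Y ≤ j := by
      intro Y j hj
      have h : ∃ j, F j X k = some Y := ⟨j, hj⟩
      simp only [haDef, dif_pos h]
      exact Nat.find_le hj
    -- unfolding membership in Bk
    have hBkmem : ∀ l ∈ Bk, 0 < l ∧ l ≤ n - 1 ∧ F (l-1) X k = some (Yof l) ∧
        ((Yof l) ∩ C l).Nonempty := by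
      intro l hl
      rw [hBkDef, Finset.mem_filter, Finset.mem_Ioc] at hl
      obtain ⟨⟨h0, h1⟩, _, Y, hF, hYC⟩ := hl
      have hYeq : Yof l = Y := by simp [hYofDef, hF]
      exact ⟨h0, h1, by rw [hYeq]; exact hF, by rw [hYeq]; exact hYC⟩
    -- per-friend facts
    have hYfacts : ∀ Y ∈ T, (∃ j, F j X k = some Y) ∧ a Y < d Y ∧
        ((Bk.filter fun l' => Yof l' = Y).card : ℝ)
          ≤ (1 / (2 * (t:ℝ))) * ((d Y : ℝ) - (a Y : ℝ)) := by
      intro Y hY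
      obtain ⟨l, hlBk, hlY⟩ := Finset.mem_image.mp hY
      obtain ⟨hl0, hln, hF, hYC⟩ := hBkmem l hlBk
      rw [hlY] at hF hYC
      have hexY : ∃ j, F j X k = some Y := ⟨l-1, hF⟩
      have hYmem : Y ∈ S (l-1) := hFmem (l-1) (by omega) X (hXall (l-1) (by omega)) k hkt Y hF
      have hYl : Y ∈ S l := (hrule l (by omega) (by omega) Y hYmem).mpr (Or.inl ⟨hYmem, hYC⟩)
      have hld : l < d Y := hdgt Y l (by omega) hYl
      have hal : a Y ≤ l - 1 := ha2 Y (l-1) hF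
      refine ⟨hexY, by omega, ?_⟩
      have hsub : Bk.filter (fun l' => Yof l' = Y) ⊆
          (Finset.Ioc (a Y) (d Y - 1)).filter (fun l' => TransAlpha S C l' Y) := by
        intro m hm
        obtain ⟨hmBk, hmY⟩ := Finset.mem_filter.mp hm
        obtain ⟨hm0, hmn, hmF, hmC⟩ := hBkmem m hmBk
        rw [hmY] at hmF hmC
        have hYm1 : Y ∈ S (m-1) :=
          hFmem (m-1) (by omega) X (hXall (m-1) (by omega)) k hkt Y hmF
        have hTA : TransAlpha S C m Y := ⟨hYm1, hmC⟩
        have hYm : Y ∈ S m := (hrule m (by omega) (by omega) Y hYm1).mpr (Or.inl hTA)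
        have hmd : m < d Y := hdgt Y m (by omega) hYm
        have ham : a Y ≤ m - 1 := ha2 Y (m-1) hmF
        exact Finset.mem_filter.mpr ⟨Finset.mem_Ioc.mpr ⟨by omega, by omega⟩, hTA⟩
      have h1 : (Bk.filter (fun l' => Yof l' = Y)).card ≤ NAlpha S C (a Y) (d Y - 1) Y :=
        Finset.card_le_card hsub
      have h2 := hdeath Y (by omega) (a Y) (by omega)
      calc ((Bk.filter fun l' => Yof l' = Y).card : ℝ)
          ≤ (NAlpha S C (a Y) (d Y - 1) Y : ℝ) := by exact_mod_cast h1
        _ ≤ (1 / (2 * (t:ℝ))) * ((d Y : ℝ) - (a Y : ℝ)) := h2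
    -- disjointness of friend intervals
    have hdisj : ∀ Y ∈ T, ∀ Y' ∈ T, Y ≠ Y' →
        Disjoint (Finset.Ioc (a Y) (d Y)) (Finset.Ioc (a Y') (d Y')) := by
      intro Y hY Y' hY' hne
      obtain ⟨hexY, _, _⟩ := hYfacts Y hY
      obtain ⟨hexY', _, _⟩ := hYfacts Y' hY'
      rw [Finset.disjoint_left]
      intro m hm hm'
      rw [Finset.mem_Ioc] at hm hm'
      have hdn := hd3 Y
      have hdn' := hd3 Y'
      have hFj : F (m-1) X k = some Y :=
        hpers Y (a Y) (m-1) (ha1 Y hexY) (by omega) (by omega) (by omega)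
      have hFj' : F (m-1) X k = some Y' :=
        hpers Y' (a Y') (m-1) (ha1 Y' hexY') (by omega) (by omega) (by omega)
      rw [hFj] at hFj'
      exact hne (Option.some_inj.mp hFj')
    -- sum of interval lengths is at most n
    have hsum : ∑ Y ∈ T, (Finset.Ioc (a Y) (d Y)).card ≤ n := by
      rw [← Finset.card_biUnion hdisj]
      have hsub2 : T.biUnion (fun Y => Finset.Ioc (a Y) (d Y)) ⊆ Finset.Ioc 0 n := by
        intro m hm
        obtain ⟨Y, hY, hm⟩ := Finset.mem_biUnion.mp hm
        rw [Finset.mem_Ioc] at hm ⊢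
        have := hd3 Y
        omega
      calc (T.biUnion fun Y => Finset.Ioc (a Y) (d Y)).card
          ≤ (Finset.Ioc 0 n).card := Finset.card_le_card hsub2
        _ = n := by simp
    have hfib : Bk.card = ∑ Y ∈ T, (Bk.filter fun l' => Yof l' = Y).card :=
      Finset.card_eq_sum_card_fiberwise (fun l hl => Finset.mem_image_of_mem _ hl)
    calc (Bk.card : ℝ)
        = ∑ Y ∈ T, ((Bk.filter fun l' => Yof l' = Y).card : ℝ) := by
          rw [hfib]; push_cast; ring
      _ ≤ ∑ Y ∈ T, (1 / (2 * (t:ℝ))) * ((d Y : ℝ) - (a Y : ℝ)) :=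
          Finset.sum_le_sum (fun Y hY => (hYfacts Y hY).2.2)
      _ = (1 / (2 * (t:ℝ))) * ∑ Y ∈ T, ((d Y : ℝ) - (a Y : ℝ)) := by
          rw [Finset.mul_sum]
      _ ≤ (1 / (2 * (t:ℝ))) * n := by
          apply mul_le_mul_of_nonneg_left _ hεpos.le
          have heq : ∑ Y ∈ T, ((d Y : ℝ) - (a Y : ℝ))
              = ∑ Y ∈ T, ((Finset.Ioc (a Y) (d Y)).card : ℝ) := by
            apply Finset.sum_congr rfl
            intro Y hY
            obtain ⟨_, had, _⟩ := hYfacts Y hY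
            rw [Nat.card_Ioc, Nat.cast_sub had.le]
          rw [heq]
          calc ∑ Y ∈ T, ((Finset.Ioc (a Y) (d Y)).card : ℝ)
              = ((∑ Y ∈ T, (Finset.Ioc (a Y) (d Y)).card : ℕ) : ℝ) := by push_cast; ring
            _ ≤ (n : ℝ) := by exact_mod_cast hsum
  -- assemble over all slots
  have hBsub : (Finset.Ioc 0 (n-1)).filter (fun l => TransBeta S F C t l X) ⊆
      (Finset.range t).biUnion (fun k => (Finset.Ioc 0 (n-1)).filter fun l =>
        TransBeta S F C t l X ∧ ∃ Y, F (l-1) X k = some Y ∧ (Y ∩ C l).Nonempty) := by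
    intro l hl
    obtain ⟨hlI, hlB⟩ := Finset.mem_filter.mp hl
    obtain ⟨_, _, k, hkt, Y, hF, hYC⟩ := id hlB
    exact Finset.mem_biUnion.mpr ⟨k, Finset.mem_range.mpr hkt,
      Finset.mem_filter.mpr ⟨hlI, hlB, Y, hF, hYC⟩⟩
  have h1 : NBeta S F C t 0 (n-1) X ≤ ∑ k ∈ Finset.range t,
      ((Finset.Ioc 0 (n-1)).filter fun l =>
        TransBeta S F C t l X ∧ ∃ Y, F (l-1) X k = some Y ∧ (Y ∩ C l).Nonempty).card :=
    le_trans (Finset.card_le_card hBsub) Finset.card_biUnion_le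
  calc (NBeta S F C t 0 (n-1) X : ℝ)
      ≤ ∑ k ∈ Finset.range t, (((Finset.Ioc 0 (n-1)).filter fun l =>
          TransBeta S F C t l X ∧ ∃ Y, F (l-1) X k = some Y ∧ (Y ∩ C l).Nonempty).card : ℝ) := by
        exact_mod_cast h1
    _ ≤ ∑ _k ∈ Finset.range t, (1 / (2 * (t:ℝ))) * n :=
        Finset.sum_le_sum (fun k hk => hkey k (Finset.mem_range.mp hk))
    _ = (t : ℝ) * (1 / (2 * (t : ℝ))) * n := by
        rw [Finset.sum_const, Finset.card_range, nsmul_eq_mul]; ring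
end

section
/- Fix an evolution (S_0,F_0), …, (S_n,F_n) of t-societies. For every group X and every index j with 0 ≤ j ≤ n and X ∈ S_j, we have N^α_{0,j}(X) ≥ ε·(N^α_{0,j}(X) + N^γ_{0,j}(X)). -/
open scoped Classical

/-- **Lemma 3 (many α-transitions).**  Fix an evolution `(S 0, F 0), …, (S n, F n)` of
`t`-societies.  For every group `X` and every `j ≤ n` with `X ∈ S j`, we have
`N^α_{0,j}(X) ≥ ε * (N^α_{0,j}(X) + N^γ_{0,j}(X))`, where `ε = 1/(2t)`. -/
theorem NAlpha_ge_eps_mul_add_NGamma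
    {α : Type*} [PartialOrder α]
    (n t : ℕ) (ht : 0 < t)
    (S : ℕ → Set (Set α)) (F : ℕ → Set α → ℕ → Option (Set α)) (C : ℕ → Set α)
    -- the `C j` (for `j ≥ 1`) are pairwise disjoint (possibly empty) chains of `P`
    (hCchain : ∀ j, 1 ≤ j → IsChain (· ≤ ·) (C j))
    (hCdisj : ∀ i j, 1 ≤ i → 1 ≤ j → i ≠ j → Disjoint (C i) (C j))
    -- each `S j` is a finite set of groups
    (hSfin : ∀ j, j ≤ n → (S j).Finite)
    -- the societies decrease: `S 0 ⊇ S 1 ⊇ ⋯ ⊇ S n`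
    (hSmono : ∀ j, 1 ≤ j → j ≤ n → S j ⊆ S (j - 1))
    -- each friend of a group of `S j` is a group of `S j`
    (hFmem : ∀ j, j ≤ n → ∀ X ∈ S j, ∀ k < t, ∀ Y, F j X k = some Y → Y ∈ S j)
    -- a group of `S (j-1)` survives to `S j` iff it makes a transition of type α, β or γ
    (hrule : ∀ j, 1 ≤ j → j ≤ n → ∀ X ∈ S (j - 1),
      (X ∈ S j ↔ TransAlpha S C j X ∨ TransBeta S F C t j X ∨ TransGamma S F C t j X))
    -- friendship is a lifetime commitment
    (hlife : ∀ j, 1 ≤ j → j ≤ n → ∀ X Y : Set α, ∀ k < t,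
      F (j - 1) X k = some Y → X ∈ S j → Y ∈ S j → F j X k = some Y)
    (X : Set α) (j : ℕ) (hj : j ≤ n) (hX : X ∈ S j) :
    (NAlpha S C 0 j X : ℝ) ≥
      (1 / (2 * (t : ℝ))) * ((NAlpha S C 0 j X : ℝ) + (NGamma S F C t 0 j X : ℝ)) := by
  set ε : ℝ := 1 / (2 * (t : ℝ)) with hεdef
  have ht1 : (1 : ℝ) ≤ (t : ℝ) := by exact_mod_cast ht
  have hεpos : 0 < ε := by
    rw [hεdef]; positivity
  have hεle : ε ≤ 1 := by
    rw [hεdef]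
    rw [div_le_one (by linarith)]
    linarith
  -- membership is downward closed
  have hmem : ∀ m, m ≤ n → X ∈ S m → ∀ i, i ≤ m → X ∈ S i := by
    intro m
    induction m with
    | zero =>
      intro _ hX0 i hi
      obtain rfl : i = 0 := Nat.le_zero.mp hi
      exact hX0
    | succ m ih =>
      intro hmn hXm i hi
      rcases Nat.lt_or_ge i (m + 1) with h | h
      · have hXm' : X ∈ S m := by
          have := hSmono (m + 1) (Nat.succ_le_succ (Nat.zero_le m)) hmn hXm
          simpa using this
        exact ih (by omega) hXm' i (by omega)
      · have : i = m + 1 := by omega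
        subst this; exact hXm
  -- splitting lemma for counts over Ioc
  have hsplit : ∀ (p : ℕ → Prop) (i j : ℕ), i ≤ j →
      ((Finset.Ioc 0 j).filter p).card
        = ((Finset.Ioc 0 i).filter p).card + ((Finset.Ioc i j).filter p).card := by
    intro p i j hij
    rw [← Finset.card_union_of_disjoint, ← Finset.filter_union,
      Finset.Ioc_union_Ioc_eq_Ioc (Nat.zero_le i) hij]
    refine Finset.disjoint_left.2 ?_
    intro a ha hb
    simp only [Finset.mem_filter, Finset.mem_Ioc] at ha hb
    omega
  -- succ lemma for counts
  have hsucc : ∀ (p : ℕ → Prop) (i m : ℕ), i ≤ m →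
      ((Finset.Ioc i (m + 1)).filter p).card
        = ((Finset.Ioc i m).filter p).card + if p (m + 1) then 1 else 0 := by
    intro p i m him
    rw [Finset.card_filter, Finset.card_filter, Finset.sum_Ioc_succ_top him]
  -- the key strong induction
  have key : ∀ m, m ≤ n → X ∈ S m →
      ε * ((m : ℝ) - (NBeta S F C t 0 m X : ℝ)) ≤ (NAlpha S C 0 m X : ℝ) := by
    intro m
    induction m using Nat.strong_induction_on with
    | _ m ih =>
      intro hmn hXm
      match m with
      | 0 =>
        simp [NAlpha, NBeta]
      | Nat.succ m =>
        have hXm' : X ∈ S m := hmem (m + 1) hmn hXm m (by omega)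
        have htri : TransAlpha S C (m + 1) X ∨ TransBeta S F C t (m + 1) X ∨
            TransGamma S F C t (m + 1) X := by
          have := hrule (m + 1) (by omega) hmn X (by simpa using hXm')
          exact this.1 hXm
        have ihm := ih m (by omega) (by omega) hXm'
        have hαsucc := hsucc (fun l => TransAlpha S C l X) 0 m (Nat.zero_le m)
        have hβsucc := hsucc (fun l => TransBeta S F C t l X) 0 m (Nat.zero_le m)
        have hβmono : (NBeta S F C t 0 m X : ℝ) ≤ (NBeta S F C t 0 (m + 1) X : ℝ) := by
          have := hsplit (fun l => TransBeta S F C t l X) m (m + 1) (by omega)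
          unfold NBeta
          exact_mod_cast Nat.le.intro this.symm
        rcases htri with hα | hβ | hγ
        · -- α-transition at step m+1
          have hnotβ : ¬ TransBeta S F C t (m + 1) X := fun h => h.2.1 hα.2
          have h1 : (NAlpha S C 0 (m + 1) X : ℝ) = (NAlpha S C 0 m X : ℝ) + 1 := by
            unfold NAlpha
            rw [hαsucc, if_pos hα]; push_cast; ring
          have h2 : (NBeta S F C t 0 (m + 1) X : ℝ) = (NBeta S F C t 0 m X : ℝ) := by
            unfold NBeta
            rw [hβsucc, if_neg hnotβ]; push_cast; ring
          rw [h1, h2]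
          push_cast
          nlinarith
        · -- β-transition
          have hnotα : ¬ TransAlpha S C (m + 1) X := fun h => hβ.2.1 h.2
          have h1 : (NAlpha S C 0 (m + 1) X : ℝ) = (NAlpha S C 0 m X : ℝ) := by
            unfold NAlpha
            rw [hαsucc, if_neg hnotα]; push_cast; ring
          have h2 : (NBeta S F C t 0 (m + 1) X : ℝ) = (NBeta S F C t 0 m X : ℝ) + 1 := by
            unfold NBeta
            rw [hβsucc, if_pos hβ]; push_cast; ring
          rw [h1, h2]
          push_cast
          linarith
        · -- γ-transition
          have hnotα : ¬ TransAlpha S C (m + 1) X := fun h => hγ.2.1 h.2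
          obtain ⟨i, hi, hwit⟩ := hγ.2.2.2
          simp only [Nat.add_sub_cancel] at hi hwit
          have ihi := ih i (by omega) (by omega) (hmem (m + 1) hmn hXm i (by omega))
          -- split NAlpha at i
          have hAs : (NAlpha S C 0 (m + 1) X : ℝ)
              = (NAlpha S C 0 i X : ℝ) + (NAlpha S C i (m + 1) X : ℝ) := by
            have := hsplit (fun l => TransAlpha S C l X) i (m + 1) (by omega)
            unfold NAlpha
            exact_mod_cast congrArg Nat.cast this
          have hAi : (NAlpha S C i (m + 1) X : ℝ) = (NAlpha S C i m X : ℝ) := by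
            unfold NAlpha
            rw [hsucc (fun l => TransAlpha S C l X) i m hi, if_neg hnotα]
            push_cast; ring
          have hBs : (NBeta S F C t 0 i X : ℝ) ≤ (NBeta S F C t 0 (m + 1) X : ℝ) := by
            have := hsplit (fun l => TransBeta S F C t l X) i (m + 1) (by omega)
            unfold NBeta
            exact_mod_cast Nat.le.intro this.symm
          have key2 : ε * (((m : ℝ) + 1) - (NBeta S F C t 0 i X : ℝ))
              ≤ (NAlpha S C 0 (m + 1) X : ℝ) := by
            rw [hAs, hAi]
            have : ε * (((m : ℝ) + 1) - (i : ℝ)) < (NAlpha S C i m X : ℝ) := by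
              have := hwit
              push_cast at this ⊢
              linarith
            nlinarith
          have : ε * (((m : ℝ) + 1) - (NBeta S F C t 0 (m + 1) X : ℝ))
              ≤ ε * (((m : ℝ) + 1) - (NBeta S F C t 0 i X : ℝ)) := by
            apply mul_le_mul_of_nonneg_left _ (le_of_lt hεpos)
            linarith
          push_cast
          linarith
  -- the partition: NAlpha + NBeta + NGamma = j
  have hpart : NAlpha S C 0 j X + NBeta S F C t 0 j X + NGamma S F C t 0 j X = j := by
    unfold NAlpha NBeta NGamma
    rw [Finset.card_filter, Finset.card_filter, Finset.card_filter,
      ← Finset.sum_add_distrib, ← Finset.sum_add_distrib]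
    have : ∀ l ∈ Finset.Ioc 0 j,
        ((if TransAlpha S C l X then 1 else 0)
          + (if TransBeta S F C t l X then 1 else 0))
          + (if TransGamma S F C t l X then 1 else 0) = 1 := by
      intro l hl
      simp only [Finset.mem_Ioc] at hl
      have hXl : X ∈ S l := hmem j hj hX l hl.2
      have hXl' : X ∈ S (l - 1) := hmem j hj hX (l - 1) (by omega)
      have htri := (hrule l hl.1 (by omega) X hXl').1 hXl
      rcases htri with hα | hβ | hγ
      · have h1 : ¬ TransBeta S F C t l X := fun h => h.2.1 hα.2
        have h2 : ¬ TransGamma S F C t l X := fun h => h.2.1 hα.2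
        rw [if_pos hα, if_neg h1, if_neg h2]
      · have h1 : ¬ TransAlpha S C l X := fun h => hβ.2.1 h.2
        have h2 : ¬ TransGamma S F C t l X := fun h => h.2.2.1 hβ.2.2
        rw [if_neg h1, if_pos hβ, if_neg h2]
      · have h1 : ¬ TransAlpha S C l X := fun h => hγ.2.1 h.2
        have h2 : ¬ TransBeta S F C t l X := fun h => hγ.2.2.1 h.2.2
        rw [if_neg h1, if_neg h2, if_pos hγ]
    rw [Finset.sum_congr rfl this]
    simp
  have hkey := key j hj hX
  have hpartR : (NAlpha S C 0 j X : ℝ) + (NGamma S F C t 0 j X : ℝ)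
      = (j : ℝ) - (NBeta S F C t 0 j X : ℝ) := by
    have : ((NAlpha S C 0 j X + NBeta S F C t 0 j X + NGamma S F C t 0 j X : ℕ) : ℝ)
        = (j : ℝ) := by exact_mod_cast congrArg Nat.cast hpart
    push_cast at this
    linarith
  rw [ge_iff_le, hpartR]
  exact hkey
end

section
/- Fix an evolution (S_0,F_0), …, (S_n,F_n) of t-societies with n ≥ 1 and S_n = ∅. If X ∈ S_{n−1}, then |X| ≥ (n−2)/(4t). -/
open scoped Classical

lemma aux_Ioc_succ (i j : ℕ) (h : i ≤ j) :
    Finset.Ioc i (j + 1) = insert (j + 1) (Finset.Ioc i j) := by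
  ext x
  simp only [Finset.mem_Ioc, Finset.mem_insert]
  omega

lemma aux_count_succ (P : ℕ → Prop) (i j : ℕ) (h : i ≤ j) :
    ((Finset.Ioc i (j + 1)).filter fun l => P l).card
      = ((Finset.Ioc i j).filter fun l => P l).card + (if P (j + 1) then 1 else 0) := by
  classical
  rw [aux_Ioc_succ i j h, Finset.filter_insert]
  split
  · rw [Finset.card_insert_of_notMem (by simp)]
  · simp

/-- **Lemma 4 (long evolutions produce large groups).**  Fix an evolution
`(S 0, F 0), …, (S n, F n)` of `t`-societies with `n ≥ 1` and `S n = ∅`.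
If `X ∈ S (n-1)`, then `|X| ≥ (n - 2) / (4t)`. -/
theorem ncard_ge_of_mem_penultimate
    {α : Type*} [PartialOrder α] [Fintype α]
    (n t : ℕ) (hn : 1 ≤ n) (ht : 0 < t)
    (S : ℕ → Set (Set α)) (F : ℕ → Set α → ℕ → Option (Set α)) (C : ℕ → Set α)
    -- the `C j` (for `j ≥ 1`) are pairwise disjoint (possibly empty) chains of `P`
    (hCchain : ∀ j, 1 ≤ j → IsChain (· ≤ ·) (C j))
    (hCdisj : ∀ i j, 1 ≤ i → 1 ≤ j → i ≠ j → Disjoint (C i) (C j))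
    -- each `S j` is a finite set of groups
    (hSfin : ∀ j, j ≤ n → (S j).Finite)
    -- the societies decrease: `S 0 ⊇ S 1 ⊇ ⋯ ⊇ S n`
    (hSmono : ∀ j, 1 ≤ j → j ≤ n → S j ⊆ S (j - 1))
    -- each friend of a group of `S j` is a group of `S j`
    (hFmem : ∀ j, j ≤ n → ∀ X ∈ S j, ∀ k < t, ∀ Y, F j X k = some Y → Y ∈ S j)
    -- a group of `S (j-1)` survives to `S j` iff it makes a transition of type α, β or γ
    (hrule : ∀ j, 1 ≤ j → j ≤ n → ∀ X ∈ S (j - 1),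
      (X ∈ S j ↔ TransAlpha S C j X ∨ TransBeta S F C t j X ∨ TransGamma S F C t j X))
    -- friendship is a lifetime commitment
    (hlife : ∀ j, 1 ≤ j → j ≤ n → ∀ X Y : Set α, ∀ k < t,
      F (j - 1) X k = some Y → X ∈ S j → Y ∈ S j → F j X k = some Y)
    -- the evolution ends with the empty society
    (hSn : S n = ∅)
    (X : Set α) (hX : X ∈ S (n - 1)) :
    ((n : ℝ) - 2) / (4 * (t : ℝ)) ≤ (X.ncard : ℝ) := by
  classical
  have htR : (0 : ℝ) < (t : ℝ) := by exact_mod_cast ht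
  -- monotonicity of the societies
  have hSmono' : ∀ i j : ℕ, i ≤ j → j ≤ n → S j ⊆ S i := by
    intro i j hij hjn
    induction j with
    | zero =>
        have : i = 0 := Nat.le_zero.mp hij
        subst this; exact fun Z hZ => hZ
    | succ m ih =>
        rcases Nat.eq_or_lt_of_le hij with rfl | hlt
        · exact fun Z hZ => hZ
        · intro Z hZ
          have h1 : S (m + 1) ⊆ S m := by
            have := hSmono (m + 1) (by omega) hjn
            simpa using this
          exact ih (by omega) (by omega) (h1 hZ)
  have hXS : ∀ j, j ≤ n - 1 → X ∈ S j := fun j hj =>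
    hSmono' j (n - 1) hj (by omega) hX
  -- death times
  have hdex : ∀ Z : Set α, ∃ m, Z ∉ S m := fun Z => ⟨n, by simp [hSn]⟩
  set d : Set α → ℕ := fun Z => Nat.find (hdex Z) with hd_def
  have hd1 : ∀ Z, Z ∉ S (d Z) := fun Z => Nat.find_spec (hdex Z)
  have hd2 : ∀ Z m, m < d Z → Z ∈ S m := fun Z m hm => not_not.mp (Nat.find_min (hdex Z) hm)
  have hd3 : ∀ Z, d Z ≤ n := fun Z => Nat.find_le (by simp [hSn])
  -- failure of γ at death time
  have hdeath : ∀ Z : Set α, 1 ≤ d Z → ∀ i, i ≤ d Z - 1 →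
      2 * t * NAlpha S C i (d Z - 1) Z ≤ d Z - i := by
    intro Z h1 i hi
    have hmem : Z ∈ S (d Z - 1) := hd2 Z (d Z - 1) (by omega)
    have hnot : Z ∉ S (d Z) := hd1 Z
    have hno : ¬ (TransAlpha S C (d Z) Z ∨ TransBeta S F C t (d Z) Z ∨
        TransGamma S F C t (d Z) Z) :=
      fun h => hnot ((hrule (d Z) h1 (hd3 Z) Z hmem).mpr h)
    push_neg at hno
    obtain ⟨hnA, hnB, hnG⟩ := hno
    have hne : ¬ (Z ∩ C (d Z)).Nonempty := fun h => hnA ⟨hmem, h⟩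
    have hnk : ¬ ∃ k < t, ∃ Y, F (d Z - 1) Z k = some Y ∧ (Y ∩ C (d Z)).Nonempty :=
      fun h => hnB ⟨hmem, hne, h⟩
    have hni : ¬ ∃ i ≤ d Z - 1, (NAlpha S C i (d Z - 1) Z : ℝ) >
        (1 / (2 * (t : ℝ))) * ((d Z : ℝ) - (i : ℝ)) :=
      fun h => hnG ⟨hmem, hne, hnk, h⟩
    push_neg at hni
    have hle := hni i hi
    have him : i ≤ d Z := by omega
    have h2t : (0 : ℝ) < 2 * (t : ℝ) := by positivity
    have hR : (2 * t * NAlpha S C i (d Z - 1) Z : ℝ) ≤ (d Z : ℝ) - (i : ℝ) := by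
      have hkey : (1 / (2 * (t : ℝ))) * ((d Z : ℝ) - (i : ℝ)) * (2 * (t : ℝ))
          = (d Z : ℝ) - (i : ℝ) := by field_simp
      calc (2 * t * NAlpha S C i (d Z - 1) Z : ℝ)
          = (NAlpha S C i (d Z - 1) Z : ℝ) * (2 * (t : ℝ)) := by push_cast; ring
        _ ≤ (1 / (2 * (t : ℝ))) * ((d Z : ℝ) - (i : ℝ)) * (2 * (t : ℝ)) :=
            mul_le_mul_of_nonneg_right hle h2t.le
        _ = (d Z : ℝ) - (i : ℝ) := hkey
    have : ((2 * t * NAlpha S C i (d Z - 1) Z : ℕ) : ℝ) ≤ ((d Z - i : ℕ) : ℝ) := by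
      rw [Nat.cast_sub him]
      push_cast
      push_cast at hR
      linarith
    exact_mod_cast this
  -- ==== the potential-function bound:  c ≤ (2t-1)·a ====
  have keyG : ∀ j : ℕ,
      ((NGamma S F C t 0 j X : ℤ) ≤ (2 * (t : ℤ) - 1) * (NAlpha S C 0 j X)) ∧
      (∀ i, i ≤ j → (2 * (t : ℤ)) * (NAlpha S C i j X) - ((j : ℤ) - (i : ℤ))
          + (NGamma S F C t 0 j X) ≤ (2 * (t : ℤ) - 1) * (NAlpha S C 0 j X)) := by
    intro j
    induction j with
    | zero =>
        constructor
        · simp [NGamma, NAlpha]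
        · intro i hi
          have : i = 0 := Nat.le_zero.mp hi
          subst this
          simp [NGamma, NAlpha]
    | succ m ih =>
        obtain ⟨ih1, ih2⟩ := ih
        have hrecA : ∀ i, i ≤ m → (NAlpha S C i (m + 1) X : ℤ)
            = (NAlpha S C i m X : ℤ)
              + (if TransAlpha S C (m + 1) X then 1 else 0) := by
          intro i hi
          have := aux_count_succ (fun l => TransAlpha S C l X) i m hi
          unfold NAlpha
          rw [this]
          split <;> simp
        have hrecG : (NGamma S F C t 0 (m + 1) X : ℤ)
            = (NGamma S F C t 0 m X : ℤ)
              + (if TransGamma S F C t (m + 1) X then 1 else 0) := by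
          have := aux_count_succ (fun l => TransGamma S F C t l X) 0 m (Nat.zero_le m)
          unfold NGamma
          rw [this]
          split <;> simp
        have hAtop : (NAlpha S C (m + 1) (m + 1) X : ℤ) = 0 := by
          simp [NAlpha]
        have ht1 : (1 : ℤ) ≤ 2 * (t : ℤ) - 1 := by
          have : (1 : ℤ) ≤ (t : ℤ) := by exact_mod_cast ht
          omega
        by_cases hA : TransAlpha S C (m + 1) X
        · have hnG : ¬ TransGamma S F C t (m + 1) X := fun h => h.2.1 hA.2
          have e1 : (NAlpha S C 0 (m + 1) X : ℤ) = (NAlpha S C 0 m X : ℤ) + 1 := by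
            rw [hrecA 0 (Nat.zero_le m)]; simp [hA]
          have e2 : (NGamma S F C t 0 (m + 1) X : ℤ) = (NGamma S F C t 0 m X : ℤ) := by
            rw [hrecG]; simp [hnG]
          constructor
          · rw [e1, e2]
            nlinarith [ih1, Int.natCast_nonneg (NAlpha S C 0 m X)]
          · intro i hi
            rcases Nat.eq_or_lt_of_le hi with rfl | hlt
            · rw [hAtop, e1, e2]
              nlinarith [ih1, Int.natCast_nonneg (NAlpha S C 0 m X)]
            · have him : i ≤ m := by omega
              have e3 : (NAlpha S C i (m + 1) X : ℤ) = (NAlpha S C i m X : ℤ) + 1 := by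
                rw [hrecA i him]; simp [hA]
              have := ih2 i him
              rw [e1, e2, e3]
              push_cast
              push_cast at this
              linarith
        · have e3 : ∀ i, i ≤ m → (NAlpha S C i (m + 1) X : ℤ) = (NAlpha S C i m X : ℤ) := by
            intro i hi
            rw [hrecA i hi]; simp [hA]
          have e1 : (NAlpha S C 0 (m + 1) X : ℤ) = (NAlpha S C 0 m X : ℤ) :=
            e3 0 (Nat.zero_le m)
          by_cases hG : TransGamma S F C t (m + 1) X
          · -- extract the witness of the γ condition
            obtain ⟨i0, hi0, hgt⟩ := hG.2.2.2
            have hi0m : i0 ≤ m := by simpa using hi0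
            have hZgt : ((m : ℤ) - (i0 : ℤ)) + 2 ≤ 2 * (t : ℤ) * (NAlpha S C i0 m X) := by
              have h2t : (0 : ℝ) < 2 * (t : ℝ) := by positivity
              have hsimp : (NAlpha S C i0 ((m + 1) - 1) X : ℝ)
                  = (NAlpha S C i0 m X : ℝ) := by norm_num
              rw [hsimp] at hgt
              have hR : ((m + 1 : ℕ) : ℝ) - (i0 : ℝ)
                  < 2 * (t : ℝ) * (NAlpha S C i0 m X : ℝ) := by
                have := mul_lt_mul_of_pos_right hgt h2t
                calc ((m + 1 : ℕ) : ℝ) - (i0 : ℝ)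
                    = (1 / (2 * (t : ℝ))) * (((m + 1 : ℕ) : ℝ) - (i0 : ℝ)) * (2 * (t : ℝ)) := by
                      field_simp
                  _ < (NAlpha S C i0 m X : ℝ) * (2 * (t : ℝ)) := this
                  _ = 2 * (t : ℝ) * (NAlpha S C i0 m X : ℝ) := by ring
              have hZ : ((m : ℤ) + 1 - (i0 : ℤ)) < 2 * (t : ℤ) * (NAlpha S C i0 m X) := by
                exact_mod_cast (by push_cast; push_cast at hR; linarith :
                  ((m : ℝ) + 1 - (i0 : ℝ)) < ((2 * (t : ℤ) * (NAlpha S C i0 m X) : ℤ) : ℝ))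
              omega
            have hih := ih2 i0 hi0m
            have hstock : (NGamma S F C t 0 m X : ℤ) + 2
                ≤ (2 * (t : ℤ) - 1) * (NAlpha S C 0 m X) := by linarith
            have e2 : (NGamma S F C t 0 (m + 1) X : ℤ)
                = (NGamma S F C t 0 m X : ℤ) + 1 := by
              rw [hrecG]; simp [hG]
            constructor
            · rw [e1, e2]; linarith
            · intro i hi
              rcases Nat.eq_or_lt_of_le hi with rfl | hlt
              · rw [hAtop, e1, e2]; push_cast; linarith
              · have him : i ≤ m := by omega
                have := ih2 i him
                rw [e1, e2, e3 i him]
                push_cast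
                push_cast at this
                linarith
          · have e2 : (NGamma S F C t 0 (m + 1) X : ℤ)
                = (NGamma S F C t 0 m X : ℤ) := by
              rw [hrecG]; simp [hG]
            constructor
            · rw [e1, e2]; exact ih1
            · intro i hi
              rcases Nat.eq_or_lt_of_le hi with rfl | hlt
              · rw [hAtop, e1, e2]
                have hnn : (0 : ℤ) ≤ (NAlpha S C 0 m X : ℤ) := Int.natCast_nonneg _
                push_cast
                linarith [ih1]
              · have him : i ≤ m := by omega
                have := ih2 i him
                rw [e1, e2, e3 i him]
                push_cast
                push_cast at this
                linarith

  -- ==== the β bound:  2·b ≤ n ====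
  set B : Finset ℕ := (Finset.Ioc 0 (n - 1)).filter (fun l => TransBeta S F C t l X)
    with hB_def
  have hwit : ∀ l : ℕ, ∃ p : ℕ × Set α, l ∈ B →
      p.1 < t ∧ F (l - 1) X p.1 = some p.2 ∧ (p.2 ∩ C l).Nonempty := by
    intro l
    by_cases hl : l ∈ B
    · have hb : TransBeta S F C t l X := (Finset.mem_filter.mp hl).2
      obtain ⟨-, -, k, hk, Y, hFY, hY⟩ := hb
      exact ⟨(k, Y), fun _ => ⟨hk, hFY, hY⟩⟩
    · exact ⟨(0, ∅), fun h => absurd h hl⟩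
  choose w hw using hwit
  have hwB : ∀ l ∈ B, 1 ≤ l ∧ l ≤ n - 1 := by
    intro l hl
    have := Finset.mem_Ioc.mp (Finset.mem_filter.mp hl).1
    omega
  have hYS : ∀ l ∈ B, (w l).2 ∈ S l ∧ TransAlpha S C l ((w l).2) := by
    intro l hl
    obtain ⟨hk, hF, hne⟩ := hw l hl
    obtain ⟨hl1, hl2⟩ := hwB l hl
    have hXl1 : X ∈ S (l - 1) := hXS (l - 1) (by omega)
    have hmem : (w l).2 ∈ S (l - 1) :=
      hFmem (l - 1) (by omega) X hXl1 (w l).1 hk (w l).2 hF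
    have hA : TransAlpha S C l ((w l).2) := ⟨hmem, hne⟩
    exact ⟨(hrule l hl1 (by omega) ((w l).2) hmem).mpr (Or.inl hA), hA⟩
  have hld : ∀ l ∈ B, l < d ((w l).2) := by
    intro l hl
    by_contra h
    push_neg at h
    exact hd1 _ (hSmono' (d ((w l).2)) l h (by have := (hwB l hl).2; omega) (hYS l hl).1)
  have hslot : ∀ k0 : ℕ, 2 * t * ((B.filter fun l => (w l).1 = k0).card) ≤ n := by
    intro k0
    set Bk : Finset ℕ := B.filter (fun l => (w l).1 = k0) with hBk_def
    set I : Finset (Set α) := Bk.image (fun l => (w l).2) with hI_def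
    set L : Set α → Finset ℕ := fun Z => Bk.filter (fun l => (w l).2 = Z) with hL_def
    have hcardsum : Bk.card = ∑ Z ∈ I, (L Z).card :=
      Finset.card_eq_sum_card_image _ _
    have hLne : ∀ Z ∈ I, (L Z).Nonempty := by
      intro Z hZ
      obtain ⟨l, hl, hlZ⟩ := Finset.mem_image.mp hZ
      exact ⟨l, Finset.mem_filter.mpr ⟨hl, hlZ⟩⟩
    have hLfact : ∀ Z, ∀ l ∈ L Z, l ∈ B ∧ (w l).1 = k0 ∧ (w l).2 = Z := by
      intro Z l hl
      have h1 := Finset.mem_filter.mp hl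
      have h2 := Finset.mem_filter.mp h1.1
      exact ⟨h2.1, h2.2, h1.2⟩
    set lm : Set α → ℕ := fun Z => if h : (L Z).Nonempty then (L Z).min' h else 0
      with hlm_def
    have hlm_mem : ∀ Z ∈ I, lm Z ∈ L Z := by
      intro Z hZ
      simp only [hlm_def, dif_pos (hLne Z hZ)]
      exact Finset.min'_mem _ _
    have hlm_le : ∀ Z ∈ I, ∀ l ∈ L Z, lm Z ≤ l := by
      intro Z hZ l hl
      simp only [hlm_def, dif_pos (hLne Z hZ)]
      exact Finset.min'_le _ _ hl
    -- facts about lm Z / d Z for Z ∈ I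
    have hfacts : ∀ Z ∈ I, 1 ≤ lm Z ∧ lm Z ≤ n - 1 ∧ lm Z < d Z := by
      intro Z hZ
      have h1 := hLfact Z (lm Z) (hlm_mem Z hZ)
      have h2 := hwB (lm Z) h1.1
      have h3 := hld (lm Z) h1.1
      rw [h1.2.2] at h3
      exact ⟨h2.1, h2.2, h3⟩
    -- claim 1: window bound
    have hwin : ∀ Z ∈ I, 2 * t * (L Z).card ≤ d Z - (lm Z - 1) := by
      intro Z hZ
      obtain ⟨hf1, hf2, hf3⟩ := hfacts Z hZ
      have hsub : L Z ⊆ (Finset.Ioc (lm Z - 1) (d Z - 1)).filter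
          (fun l => TransAlpha S C l Z) := by
        intro l hl
        obtain ⟨hlB, -, hlZ⟩ := hLfact Z l hl
        have hle := hlm_le Z hZ l hl
        have hdl := hld l hlB
        rw [hlZ] at hdl
        have hA := (hYS l hlB).2
        rw [hlZ] at hA
        exact Finset.mem_filter.mpr ⟨Finset.mem_Ioc.mpr ⟨by omega, by omega⟩, hA⟩
      have hcard : (L Z).card ≤ NAlpha S C (lm Z - 1) (d Z - 1) Z :=
        Finset.card_le_card hsub
      have hdth := hdeath Z (by omega) (lm Z - 1) (by omega)
      calc 2 * t * (L Z).card ≤ 2 * t * NAlpha S C (lm Z - 1) (d Z - 1) Z :=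
            Nat.mul_le_mul_left _ hcard
        _ ≤ d Z - (lm Z - 1) := hdth
    -- claim 2: the windows are pairwise disjoint
    have hkey : ∀ Z ∈ I, ∀ Z' ∈ I, lm Z < lm Z' → Z ≠ Z' → d Z < lm Z' := by
      intro Z hZ Z' hZ' hlt hne
      by_contra hcon
      push_neg at hcon
      have h1 := hLfact Z (lm Z) (hlm_mem Z hZ)
      have h2 := hLfact Z' (lm Z') (hlm_mem Z' hZ')
      have hk0 : (w (lm Z)).1 = k0 := h1.2.1
      have hkt : k0 < t := by rw [← hk0]; exact (hw (lm Z) h1.1).1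
      have hb2 := hwB (lm Z') h2.1
      have hb1 := hwB (lm Z) h1.1
      have hdZ : lm Z < d Z := (hfacts Z hZ).2.2
      -- persistence of friendship
      have hstep : ∀ j, lm Z ≤ j → j ≤ lm Z' - 1 → F j X k0 = some Z := by
        intro j hj1 hj2
        induction j with
        | zero => omega
        | succ m ihm =>
          rcases Nat.eq_or_lt_of_le hj1 with heq | hlt2
          · -- base case : m + 1 = lm Z
            have hFw : F (lm Z - 1) X k0 = some Z := by
              have := (hw (lm Z) h1.1).2.1
              rw [hk0, h1.2.2] at this
              exact this
            have hXm : X ∈ S (lm Z) := hXS (lm Z) hb1.2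
            have hZm : Z ∈ S (lm Z) := hd2 Z (lm Z) hdZ
            have := hlife (lm Z) (by omega) (by omega) X Z k0 hkt hFw hXm hZm
            rw [heq] at this
            exact this
          · -- inductive step : lm Z ≤ m
            have hFm : F m X k0 = some Z := ihm (by omega) (by omega)
            have hXm : X ∈ S (m + 1) := hXS (m + 1) (by omega)
            have hZm : Z ∈ S (m + 1) := hd2 Z (m + 1) (by omega)
            have := hlife (m + 1) (by omega) (by omega) X Z k0 hkt
              (by simpa using hFm) hXm hZm
            exact this
      have hFend : F (lm Z' - 1) X k0 = some Z := hstep (lm Z' - 1) (by omega) le_rfl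
      have hFend' : F (lm Z' - 1) X k0 = some Z' := by
        have := (hw (lm Z') h2.1).2.1
        rw [h2.2.1, h2.2.2] at this
        exact this
      rw [hFend] at hFend'
      exact hne (Option.some.inj hFend')
    have hlm_inj : ∀ Z ∈ I, ∀ Z' ∈ I, Z ≠ Z' → lm Z ≠ lm Z' := by
      intro Z hZ Z' hZ' hne heq
      have h1 := hLfact Z (lm Z) (hlm_mem Z hZ)
      have h2 := hLfact Z' (lm Z') (hlm_mem Z' hZ')
      rw [heq] at h1
      exact hne (h1.2.2.symm.trans h2.2.2)
    have hdisj : ∀ Z ∈ I, ∀ Z' ∈ I, Z ≠ Z' →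
        Disjoint (Finset.Ioc (lm Z - 1) (d Z)) (Finset.Ioc (lm Z' - 1) (d Z')) := by
      intro Z hZ Z' hZ' hne
      rcases lt_trichotomy (lm Z) (lm Z') with h | h | h
      · have := hkey Z hZ Z' hZ' h hne
        have h1 := (hfacts Z hZ).1
        apply Finset.disjoint_left.mpr
        intro x hx hx'
        simp only [Finset.mem_Ioc] at hx hx'
        omega
      · exact absurd h (hlm_inj Z hZ Z' hZ' hne)
      · have := hkey Z' hZ' Z hZ h hne.symm
        have h1 := (hfacts Z' hZ').1
        apply Finset.disjoint_left.mpr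
        intro x hx hx'
        simp only [Finset.mem_Ioc] at hx hx'
        omega
    -- assemble the per-slot bound
    have hsum1 : 2 * t * Bk.card = ∑ Z ∈ I, 2 * t * (L Z).card := by
      rw [hcardsum, Finset.mul_sum]
    have hsum2 : ∑ Z ∈ I, 2 * t * (L Z).card
        ≤ ∑ Z ∈ I, (Finset.Ioc (lm Z - 1) (d Z)).card := by
      apply Finset.sum_le_sum
      intro Z hZ
      rw [Nat.card_Ioc]
      exact hwin Z hZ
    have hsum3 : ∑ Z ∈ I, (Finset.Ioc (lm Z - 1) (d Z)).card
        = (I.biUnion fun Z => Finset.Ioc (lm Z - 1) (d Z)).card :=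
      (Finset.card_biUnion hdisj).symm
    have hsub2 : (I.biUnion fun Z => Finset.Ioc (lm Z - 1) (d Z)) ⊆ Finset.Ioc 0 n := by
      intro x hx
      obtain ⟨Z, hZ, hxZ⟩ := Finset.mem_biUnion.mp hx
      have := Finset.mem_Ioc.mp hxZ
      have hdn := hd3 Z
      exact Finset.mem_Ioc.mpr ⟨by omega, by omega⟩
    calc 2 * t * Bk.card = ∑ Z ∈ I, 2 * t * (L Z).card := hsum1
      _ ≤ ∑ Z ∈ I, (Finset.Ioc (lm Z - 1) (d Z)).card := hsum2
      _ = (I.biUnion fun Z => Finset.Ioc (lm Z - 1) (d Z)).card := hsum3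
      _ ≤ (Finset.Ioc 0 n).card := Finset.card_le_card hsub2
      _ = n := by rw [Nat.card_Ioc]; omega
  -- sum over the slots
  have hBtotal : 2 * B.card ≤ n := by
    have hfib : B.card = ∑ k0 ∈ Finset.range t, (B.filter fun l => (w l).1 = k0).card :=
      Finset.card_eq_sum_card_fiberwise (fun l hl => Finset.mem_range.mpr (hw l hl).1)
    have h2 : 2 * t * B.card ≤ t * n := by
      calc 2 * t * B.card = ∑ k0 ∈ Finset.range t, 2 * t * (B.filter fun l => (w l).1 = k0).card := by
            rw [hfib, Finset.mul_sum]
        _ ≤ ∑ _k0 ∈ Finset.range t, n := Finset.sum_le_sum fun k0 _ => hslot k0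
        _ = t * n := by simp [Finset.sum_const, Finset.card_range, mul_comm]
      -- done
    have : t * (2 * B.card) ≤ t * n := by
      calc t * (2 * B.card) = 2 * t * B.card := by ring
        _ ≤ t * n := h2
    exact Nat.le_of_mul_le_mul_left this ht
  -- ==== the covering bound:  n - 1 ≤ a + b + c ====
  set a : ℕ := NAlpha S C 0 (n - 1) X with ha_def
  set b : ℕ := B.card with hb_def
  set c : ℕ := NGamma S F C t 0 (n - 1) X with hc_def
  have hcover : n - 1 ≤ a + b + c := by
    have hsubset : Finset.Ioc 0 (n - 1) ⊆
        (((Finset.Ioc 0 (n - 1)).filter fun l => TransAlpha S C l X) ∪ B) ∪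
          ((Finset.Ioc 0 (n - 1)).filter fun l => TransGamma S F C t l X) := by
      intro l hl
      obtain ⟨hl0, hl1⟩ := Finset.mem_Ioc.mp hl
      have hX1 : X ∈ S (l - 1) := hXS (l - 1) (by omega)
      have hX2 : X ∈ S l := hXS l hl1
      rcases (hrule l hl0 (by omega) X hX1).mp hX2 with h | h | h
      · exact Finset.mem_union_left _ (Finset.mem_union_left _
          (Finset.mem_filter.mpr ⟨hl, h⟩))
      · exact Finset.mem_union_left _ (Finset.mem_union_right _
          (Finset.mem_filter.mpr ⟨hl, h⟩))
      · exact Finset.mem_union_right _ (Finset.mem_filter.mpr ⟨hl, h⟩)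
    calc n - 1 = (Finset.Ioc 0 (n - 1)).card := by rw [Nat.card_Ioc]; omega
      _ ≤ ((((Finset.Ioc 0 (n - 1)).filter fun l => TransAlpha S C l X) ∪ B) ∪
          ((Finset.Ioc 0 (n - 1)).filter fun l => TransGamma S F C t l X)).card :=
          Finset.card_le_card hsubset
      _ ≤ ((((Finset.Ioc 0 (n - 1)).filter fun l => TransAlpha S C l X) ∪ B)).card
          + ((Finset.Ioc 0 (n - 1)).filter fun l => TransGamma S F C t l X).card :=
          Finset.card_union_le _ _
      _ ≤ a + b + c := by
          have := Finset.card_union_le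
            ((Finset.Ioc 0 (n - 1)).filter fun l => TransAlpha S C l X) B
          simp only [ha_def, hb_def, hc_def, NAlpha, NGamma]
          omega
  -- ==== the α bound:  a ≤ |X| ====
  have hacard : a ≤ X.ncard := by
    set T : Finset ℕ := (Finset.Ioc 0 (n - 1)).filter (fun l => TransAlpha S C l X)
      with hT_def
    rcases T.eq_empty_or_nonempty with hT | ⟨l0, hl0⟩
    · have : a = 0 := by simp [ha_def, NAlpha, ← hT_def, hT]
      omega
    · have hA0 : TransAlpha S C l0 X := (Finset.mem_filter.mp hl0).2
      obtain ⟨x0, hx0⟩ := hA0.2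
      set f : ℕ → α := fun l => if h : (X ∩ C l).Nonempty then h.choose else x0
        with hf_def
    -- f maps T into X
      have hfmem : ∀ l ∈ T, f l ∈ X ∩ C l := by
        intro l hl
        have hA : TransAlpha S C l X := (Finset.mem_filter.mp hl).2
        simp only [hf_def, dif_pos hA.2]
        exact hA.2.choose_spec
      have hfin : X.Finite := X.toFinite
      have hcard : T.card ≤ hfin.toFinset.card := by
        apply Finset.card_le_card_of_injOn f
        · intro l hl
          exact hfin.mem_toFinset.mpr (hfmem l hl).1
        · intro l hl l' hl' hf
          by_contra hne
          have h1 := Finset.mem_Ioc.mp (Finset.mem_filter.mp hl).1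
          have h2 := Finset.mem_Ioc.mp (Finset.mem_filter.mp hl').1
          have hm1 : f l ∈ C l := (hfmem l hl).2
          have hm2 : f l' ∈ C l' := (hfmem l' hl').2
          rw [hf] at hm1
          exact (hCdisj l l' (by omega) (by omega) hne).ne_of_mem hm1 hm2 rfl
      have : a = T.card := by simp [ha_def, NAlpha, hT_def]
      rw [this, Set.ncard_eq_toFinset_card X hfin]
      exact hcard
  -- ==== final arithmetic ====
  have h2 : (c : ℤ) ≤ (2 * (t : ℤ) - 1) * a := (keyG (n - 1)).1
  have hZfinal : (n : ℤ) - 2 ≤ 4 * (t : ℤ) * a := by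
    have h1' : (n : ℤ) - 1 ≤ (a : ℤ) + b + c := by
      have : ((n - 1 : ℕ) : ℤ) ≤ ((a + b + c : ℕ) : ℤ) := by exact_mod_cast hcover
      push_cast at this
      omega
    have h3' : 2 * (b : ℤ) ≤ n := by exact_mod_cast hBtotal
    nlinarith [Int.natCast_nonneg a]
  have hRfinal : (n : ℝ) - 2 ≤ 4 * (t : ℝ) * a := by exact_mod_cast hZfinal
  have haR : (a : ℝ) ≤ (X.ncard : ℝ) := by exact_mod_cast hacard
  rw [div_le_iff₀ (by positivity : (0 : ℝ) < 4 * (t : ℝ))]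
  nlinarith [htR]
end

section
/- Let P be a finite poset and let x and y be incomparable elements of P. Let i, j, r be integers with r ≥ 1 and j > i ≥ 0, suppose x = x_1 < x_2 < ⋯ < x_r is a chain in P with h(x_r) = i + 1, suppose h(y) = j, and suppose y_1 < y_2 < ⋯ < y_j = y is a chain in P with h(y_k) = k for each k ∈ {1,…,j}. Then every element of X = {x_1,…,x_r} is incomparable to every element of Y = {y_{i+1},…,y_j}; in particular, X and Y are disjoint chains of sizes r and j − i respectively such that every element of X is incomparable to every element of Y. -/
/-- Let `P` (the finite partial order `α`) be a finite poset with height function `h`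
(`h z` is the maximum size of a chain with maximum element `z`), and let `x` and `y` be
incomparable.  Let `i, j, r` be integers with `r ≥ 1` and `j > i ≥ 0`, let
`x = x₁ < x₂ < ⋯ < x_r` be a chain with `h (x_r) = i + 1`, suppose `h y = j`, and let
`y₁ < y₂ < ⋯ < y_j = y` be a chain with `h (y_k) = k` for each `k ∈ {1, …, j}`.
Then every element of `X = {x₁, …, x_r}` is incomparable to every element of
`Y = {y_{i+1}, …, y_j}`; in particular, `X` and `Y` are disjoint chains of sizes `r`
and `j - i` respectively such that every element of `X` is incomparable to every
element of `Y`. -/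
theorem incomparable_chains_of_heights
    {α : Type*} [PartialOrder α] [Fintype α] [DecidableEq α]
    -- `h` is the height function of `P`
    (h : α → ℕ)
    (hh : ∀ z : α, IsGreatest {k | ∃ c : Finset α, c.card = k ∧
      IsChain (· ≤ ·) (c : Set α) ∧ z ∈ c ∧ ∀ w ∈ c, w ≤ z} (h z))
    -- `x` and `y` are incomparable
    (x y : α) (hxy : ¬ x ≤ y) (hyx : ¬ y ≤ x)
    (i j r : ℕ) (hr : 1 ≤ r) (hij : i < j)
    -- the chain `x = x₁ < x₂ < ⋯ < x_r` with `h (x_r) = i + 1`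
    (xc : Fin r → α) (hxc : StrictMono xc)
    (hx1 : xc ⟨0, by omega⟩ = x)
    (hxr : h (xc ⟨r - 1, by omega⟩) = i + 1)
    -- `h y = j` and the chain `y₁ < y₂ < ⋯ < y_j = y` with `h (y_k) = k`
    (hhy : h y = j)
    (yc : Fin j → α) (hyc : StrictMono yc)
    (hyj : yc ⟨j - 1, by omega⟩ = y)
    (hyk : ∀ k : Fin j, h (yc k) = (k : ℕ) + 1) :
    -- every element of `X` is incomparable to every element of `Y`
    (∀ (a : Fin r) (b : Fin j), i ≤ (b : ℕ) → ¬ xc a ≤ yc b ∧ ¬ yc b ≤ xc a) ∧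
    -- in particular, `X` and `Y` are disjoint chains of sizes `r` and `j - i`
    Disjoint (Finset.univ.image xc)
      ((Finset.univ.filter fun b : Fin j => i ≤ (b : ℕ)).image yc) ∧
    (Finset.univ.image xc).card = r ∧
    ((Finset.univ.filter fun b : Fin j => i ≤ (b : ℕ)).image yc).card = j - i ∧
    IsChain (· ≤ ·) ((Finset.univ.image xc : Finset α) : Set α) ∧
    IsChain (· ≤ ·)
      ((((Finset.univ.filter fun b : Fin j => i ≤ (b : ℕ)).image yc : Finset α)) : Set α) := by
  have hstrict : ∀ a b : α, a < b → h a < h b := by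
    intro a b hab
    obtain ⟨c, hcard, hch, hac, hall⟩ := (hh a).1
    have hbc : b ∉ c := fun hb => absurd ((hall b hb).trans_lt hab) (lt_irrefl b)
    have h1 : (insert b c).card ≤ h b := by
      refine (hh b).2 ⟨insert b c, rfl, ?_, Finset.mem_insert_self _ _, ?_⟩
      · intro u hu v hv huv
        simp only [Finset.coe_insert, Set.mem_insert_iff, Finset.mem_coe] at hu hv
        rcases hu with rfl | hu <;> rcases hv with rfl | hv
        · exact absurd rfl huv
        · exact Or.inr ((hall v hv).trans hab.le)
        · exact Or.inl ((hall u hu).trans hab.le)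
        · exact hch hu hv huv
      · intro w hw
        rcases Finset.mem_insert.mp hw with rfl | hw
        · exact le_rfl
        · exact (hall w hw).trans hab.le
    rw [Finset.card_insert_of_notMem hbc, hcard] at h1
    omega
  have hmono : ∀ a b : α, a ≤ b → h a ≤ h b := by
    intro a b hab
    rcases eq_or_lt_of_le hab with rfl | hlt
    · exact le_rfl
    · exact (hstrict a b hlt).le
  have main : ∀ (a : Fin r) (b : Fin j), i ≤ (b : ℕ) → ¬ xc a ≤ yc b ∧ ¬ yc b ≤ xc a := by
    intro a b hib
    have hxa : x ≤ xc a := by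
      rw [← hx1]
      exact hxc.monotone (Fin.le_def.mpr (Nat.zero_le _))
    have hby : yc b ≤ y := by
      rw [← hyj]
      exact hyc.monotone (Fin.le_def.mpr (show (b:ℕ) ≤ j - 1 by have := b.isLt; omega))
    constructor
    · intro hle; exact hxy (hxa.trans (hle.trans hby))
    · intro hle
      rcases eq_or_lt_of_le hle with heq | hlt
      · exact hxy (hxa.trans (heq ▸ hby))
      · have h1 : h (xc a) ≤ i + 1 := by
          rw [← hxr]
          exact hmono _ _ (hxc.monotone (Fin.le_def.mpr (show (a:ℕ) ≤ r - 1 by have := a.isLt; omega)))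
        have h2 := hyk b
        have h3 := hstrict _ _ hlt
        omega
  refine ⟨main, ?_, ?_, ?_, ?_, ?_⟩
  · rw [Finset.disjoint_left]
    intro z hz hz'
    simp only [Finset.mem_image, Finset.mem_filter, Finset.mem_univ, true_and] at hz hz'
    obtain ⟨a, rfl⟩ := hz
    obtain ⟨b, hb, hbz⟩ := hz'
    exact (main a b hb).1 hbz.ge
  · rw [Finset.card_image_of_injective _ hxc.injective, Finset.card_univ, Fintype.card_fin]
  · rw [Finset.card_image_of_injective _ hyc.injective]
    have he : (Finset.univ.filter fun b : Fin j => i ≤ (b : ℕ)) = Finset.Ici (⟨i, hij⟩ : Fin j) := by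
      ext b
      simp [Fin.le_def]
    rw [he, Fin.card_Ici]
  · intro u hu v hv _
    simp only [Finset.coe_image, Finset.coe_univ, Set.image_univ, Set.mem_range] at hu hv
    obtain ⟨a, rfl⟩ := hu
    obtain ⟨b, rfl⟩ := hv
    rcases le_total a b with hab | hab
    · exact Or.inl (hxc.monotone hab)
    · exact Or.inr (hxc.monotone hab)
  · intro u hu v hv _
    simp only [Finset.coe_image, Set.mem_image, Finset.mem_coe, Finset.mem_filter] at hu hv
    obtain ⟨a, -, rfl⟩ := hu
    obtain ⟨b, -, rfl⟩ := hv
    rcases le_total a b with hab | hab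
    · exact Or.inl (hyc.monotone hab)
    · exact Or.inr (hyc.monotone hab)
end

section
/- Let r ≥ 2 be an integer and let P be a finite poset of height q. For x ∈ P, let Z(x) be the set of elements z such that P contains a chain of size r with minimum element x and maximum element z; let b(x) = min{ h(z) : z ∈ Z(x) } if Z(x) ≠ ∅ and b(x) = q + 1 otherwise; and let I(x) = {h(x), h(x)+1, …, b(x) − 1}. Then for every x ∈ P the set I(x) is non-empty (i.e., h(x) ≤ b(x) − 1), and for every integer k the set {x ∈ P : k ∈ I(x)} has height at most r − 1. -/
private lemma chain_exists_min' {α : Type*} [PartialOrder α] {d : Finset α}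
    (hc : IsChain (· ≤ ·) (d : Set α)) (hd : d.Nonempty) :
    ∃ x ∈ d, ∀ w ∈ d, x ≤ w := by
  obtain ⟨m, hm, hmin⟩ : ∃ m ∈ d, ∀ w ∈ d, ¬ w < m := by
    obtain ⟨m, hm⟩ := Finset.exists_minimal hd
    exact ⟨m, hm.1, fun w hw hlt => absurd hlt (not_lt_of_ge (hm.2 hw hlt.le))⟩
  refine ⟨m, hm, fun w hw => ?_⟩
  rcases eq_or_ne w m with rfl | hne
  · exact le_refl _
  · rcases hc hw hm hne with h1 | h1
    · exact absurd (lt_of_le_of_ne h1 hne) (hmin w hw)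
    · exact h1

private lemma chain_exists_max' {α : Type*} [PartialOrder α] {d : Finset α}
    (hc : IsChain (· ≤ ·) (d : Set α)) (hd : d.Nonempty) :
    ∃ z ∈ d, ∀ w ∈ d, w ≤ z := by
  obtain ⟨m, hm, hmax⟩ : ∃ m ∈ d, ∀ w ∈ d, ¬ m < w := by
    obtain ⟨m, hm⟩ := Finset.exists_maximal hd
    exact ⟨m, hm.1, fun w hw hlt => absurd hlt (not_lt_of_ge (hm.2 hw hlt.le))⟩
  refine ⟨m, hm, fun w hw => ?_⟩
  rcases eq_or_ne w m with rfl | hne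
  · exact le_refl _
  · rcases hc hw hm hne with h1 | h1
    · exact h1
    · exact absurd (lt_of_le_of_ne h1 hne.symm) (hmax w hw)

/-- Let `r ≥ 2` and let `P` (the finite partial order `α`) be a finite poset of height `q`,
with height function `h` (`h z` is the maximum size of a chain with maximum element `z`).
For `x ∈ P`, let `Z x` be the set of elements `z` such that `P` contains a chain of size `r`
with minimum element `x` and maximum element `z`; let `b x = min {h z | z ∈ Z x}` if
`Z x ≠ ∅` and `b x = q + 1` otherwise; and let `I x = {h x, h x + 1, …, b x - 1}`.
Then each `I x` is non-empty, and for every integer `k` the set `{x | k ∈ I x}` has height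
at most `r - 1` (every chain it contains has size at most `r - 1`). -/
theorem interval_nonempty_and_levels_have_small_height
    {α : Type*} [PartialOrder α] [Fintype α]
    (r q : ℕ) (hr : 2 ≤ r)
    -- `q` is the height of `P`
    (hq : IsGreatest {k | ∃ c : Finset α, c.card = k ∧ IsChain (· ≤ ·) (c : Set α)} q)
    -- `h` is the height function of `P`
    (h : α → ℕ)
    (hh : ∀ z : α, IsGreatest {k | ∃ c : Finset α, c.card = k ∧
      IsChain (· ≤ ·) (c : Set α) ∧ z ∈ c ∧ ∀ w ∈ c, w ≤ z} (h z))
    -- `Z x` is the set of tops of chains of size `r` with minimum element `x`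
    (Z : α → Set α)
    (hZ : ∀ x : α, Z x = {z | ∃ c : Finset α, c.card = r ∧ IsChain (· ≤ ·) (c : Set α) ∧
      x ∈ c ∧ z ∈ c ∧ (∀ w ∈ c, x ≤ w) ∧ (∀ w ∈ c, w ≤ z)})
    -- `b x` is the minimum height of an element of `Z x`, or `q + 1` if `Z x = ∅`
    (b : α → ℕ)
    (hbmin : ∀ x : α, (Z x).Nonempty → IsLeast (h '' Z x) (b x))
    (hbempty : ∀ x : α, ¬ (Z x).Nonempty → b x = q + 1) :
    -- `I x = Finset.Icc (h x) (b x - 1)` is non-empty, i.e. `h x ≤ b x - 1`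
    (∀ x : α, (Finset.Icc (h x) (b x - 1)).Nonempty) ∧
    -- for every `k`, the set `{x | k ∈ I x}` has height at most `r - 1`
    (∀ k : ℕ, ∀ c : Finset α, (∀ x ∈ c, k ∈ Finset.Icc (h x) (b x - 1)) →
      IsChain (· ≤ ·) (c : Set α) → c.card ≤ r - 1) := by
  classical
  -- every element has height at least 1
  have hone : ∀ z : α, 1 ≤ h z := by
    intro z
    refine (hh z).2 ⟨{z}, by simp, ?_, by simp, by simp⟩
    simp [Set.pairwise_singleton]
  -- if z ∈ Z x then h x + (r - 1) ≤ h z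
  have hkey : ∀ x z : α, z ∈ Z x → h x + (r - 1) ≤ h z := by
    intro x z hz
    rw [hZ x] at hz
    obtain ⟨c', hc'card, hc'chain, hxc', hzc', hxmin, hzmax⟩ := hz
    obtain ⟨c, hccard, hcchain, hxc, hxmax⟩ := (hh x).1
    -- c ∪ c' is a chain with max z
    have hinter : c ∩ c' = {x} := by
      apply Finset.Subset.antisymm
      · intro w hw
        rw [Finset.mem_inter] at hw
        have h1 : w ≤ x := hxmax w hw.1
        have h2 : x ≤ w := hxmin w hw.2
        simp [le_antisymm h1 h2]
      · intro w hw
        rw [Finset.mem_singleton] at hw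
        subst hw
        exact Finset.mem_inter.2 ⟨hxc, hxc'⟩
    have hchain : IsChain (· ≤ ·) ((c ∪ c' : Finset α) : Set α) := by
      intro a ha b' hb' hne
      simp only [Finset.coe_union, Set.mem_union, Finset.mem_coe] at ha hb'
      rcases ha with ha | ha <;> rcases hb' with hb' | hb'
      · exact hcchain ha hb' hne
      · exact Or.inl ((hxmax a ha).trans (hxmin b' hb'))
      · exact Or.inr ((hxmax b' hb').trans (hxmin a ha))
      · exact hc'chain ha hb' hne
    have hmax : ∀ w ∈ c ∪ c', w ≤ z := by
      intro w hw
      rcases Finset.mem_union.1 hw with hw | hw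
      · exact (hxmax w hw).trans (hzmax x hxc')
      · exact hzmax w hw
    have hcard : (c ∪ c').card = h x + r - 1 := by
      have := Finset.card_union_add_card_inter c c'
      rw [hinter] at this
      simp at this
      omega
    have := (hh z).2 ⟨c ∪ c', rfl, hchain, Finset.mem_union.2 (Or.inr hzc'), hmax⟩
    omega
  constructor
  · intro x
    rw [Finset.nonempty_Icc]
    by_cases hne : (Z x).Nonempty
    · obtain ⟨hmem, _⟩ := hbmin x hne
      obtain ⟨z, hz, hbz⟩ := hmem
      have := hkey x z hz
      omega
    · have hbx := hbempty x hne
      obtain ⟨c, hccard, hcchain, _, _⟩ := (hh x).1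
      have := hq.2 ⟨c, hccard, hcchain⟩
      omega
  · intro k c hmem hchain
    by_contra hlt
    push_neg at hlt
    have hrc : r ≤ c.card := by omega
    obtain ⟨d, hdc, hdcard⟩ := Finset.exists_subset_card_eq hrc
    have hdchain : IsChain (· ≤ ·) (d : Set α) :=
      hchain.mono (by exact_mod_cast hdc)
    have hdne : d.Nonempty := Finset.card_pos.1 (by omega)
    obtain ⟨x, hxd, hxmin⟩ := chain_exists_min' hdchain hdne
    obtain ⟨z, hzd, hzmax⟩ := chain_exists_max' hdchain hdne
    have hzZ : z ∈ Z x := by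
      rw [hZ x]
      exact ⟨d, hdcard, hdchain, hxd, hzd, hxmin, hzmax⟩
    have hbx : b x ≤ h z := (hbmin x ⟨z, hzZ⟩).2 ⟨z, hzZ, rfl⟩
    have hx := hmem x (hdc hxd)
    have hz := hmem z (hdc hzd)
    rw [Finset.mem_Icc] at hx hz
    have := hone z
    omega
end

section
/- Let r and s be integers with r ≥ 2 and s ≥ 2, and let P be a finite (𝐫+𝐬)-free poset of height q. For x ∈ P, let Z(x) be the set of elements z such that P contains a chain of size r with minimum element x and maximum element z; let b(x) = min{ h(z) : z ∈ Z(x) } if Z(x) ≠ ∅ and b(x) = q + 1 otherwise; and let I(x) = {h(x), h(x)+1, …, b(x) − 1}. Then whenever x and y are incomparable in P, either I(x) and I(y) have non-empty intersection, or at most s − 2 integers lie strictly between I(x) and I(y) (i.e., strictly greater than every element of one of the sets and strictly less than every element of the other). -/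
/-- Let `r, s ≥ 2` and let `P` (the finite partial order `α`) be a finite `(𝐫+𝐬)`-free poset
of height `q`, with height function `h` (`h z` is the maximum size of a chain with maximum
element `z`).  For `x ∈ P`, let `Z x` be the set of elements `z` such that `P` contains a
chain of size `r` with minimum element `x` and maximum element `z`; let
`b x = min {h z | z ∈ Z x}` if `Z x ≠ ∅` and `b x = q + 1` otherwise; and let
`I x = {h x, h x + 1, …, b x - 1}`.  Then whenever `x` and `y` are incomparable, either
`I x` and `I y` intersect, or at most `s - 2` integers lie strictly between `I x` and `I y`
(strictly greater than every element of one set and strictly less than every element of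
the other). -/
theorem intervals_of_incomparable_intersect_or_small_gap
    {α : Type*} [PartialOrder α] [Fintype α]
    (r s q : ℕ) (hr : 2 ≤ r) (hs : 2 ≤ s)
    -- `P` is `(𝐫 + 𝐬)`-free
    (hfree : ¬ ∃ A B : Finset α, A.card = r ∧ B.card = s ∧ Disjoint A B ∧
      IsChain (· ≤ ·) (A : Set α) ∧ IsChain (· ≤ ·) (B : Set α) ∧
      ∀ a ∈ A, ∀ b ∈ B, ¬ a ≤ b ∧ ¬ b ≤ a)
    -- `q` is the height of `P`
    (hq : IsGreatest {k | ∃ c : Finset α, c.card = k ∧ IsChain (· ≤ ·) (c : Set α)} q)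
    -- `h` is the height function of `P`
    (h : α → ℕ)
    (hh : ∀ z : α, IsGreatest {k | ∃ c : Finset α, c.card = k ∧
      IsChain (· ≤ ·) (c : Set α) ∧ z ∈ c ∧ ∀ w ∈ c, w ≤ z} (h z))
    -- `Z x` is the set of tops of chains of size `r` with minimum element `x`
    (Z : α → Set α)
    (hZ : ∀ x : α, Z x = {z | ∃ c : Finset α, c.card = r ∧ IsChain (· ≤ ·) (c : Set α) ∧
      x ∈ c ∧ z ∈ c ∧ (∀ w ∈ c, x ≤ w) ∧ (∀ w ∈ c, w ≤ z)})
    -- `b x` is the minimum height of an element of `Z x`, or `q + 1` if `Z x = ∅`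
    (b : α → ℕ)
    (hbmin : ∀ x : α, (Z x).Nonempty → IsLeast (h '' Z x) (b x))
    (hbempty : ∀ x : α, ¬ (Z x).Nonempty → b x = q + 1) :
    -- with `I x = Finset.Icc (h x) (b x - 1)`: incomparable elements have intersecting
    -- intervals, or at most `s - 2` integers lie strictly between their intervals
    ∀ x y : α, ¬ x ≤ y → ¬ y ≤ x →
      (Finset.Icc (h x) (b x - 1) ∩ Finset.Icc (h y) (b y - 1)).Nonempty ∨
      Set.ncard {k : ℕ |
        ((∀ a ∈ Finset.Icc (h x) (b x - 1), a < k) ∧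
          (∀ c ∈ Finset.Icc (h y) (b y - 1), k < c)) ∨
        ((∀ c ∈ Finset.Icc (h y) (b y - 1), c < k) ∧
          (∀ a ∈ Finset.Icc (h x) (b x - 1), k < a))} ≤ s - 2 := by
  
  classical
  -- basic facts about the height function
  have hpos : ∀ w : α, 1 ≤ h w := by
    intro w
    refine (hh w).2 ⟨{w}, by simp, ?_, by simp, by simp⟩
    simp only [Finset.coe_singleton]
    exact Set.subsingleton_singleton.isChain
  have hle_q : ∀ w : α, h w ≤ q := by
    intro w
    obtain ⟨c, hc_card, hc_chain, -, -⟩ := (hh w).1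
    exact hq.2 ⟨c, hc_card, hc_chain⟩
  have hmono : ∀ w z : α, w < z → h w + 1 ≤ h z := by
    intro w z hwz
    obtain ⟨c, hc_card, hc_chain, hw_mem, hc_le⟩ := (hh w).1
    have hz_not : z ∉ c := fun hz => lt_irrefl z (lt_of_le_of_lt (hc_le z hz) hwz)
    refine (hh z).2 ⟨insert z c, ?_, ?_, Finset.mem_insert_self z c, ?_⟩
    · rw [Finset.card_insert_of_notMem hz_not, hc_card]
    · rw [Finset.coe_insert]
      exact hc_chain.insert (fun v hv _ => Or.inr ((hc_le v hv).trans hwz.le))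
    · intro v hv
      rcases Finset.mem_insert.mp hv with rfl | hv
      · exact le_refl v
      · exact (hc_le v hv).trans hwz.le
  have hmono' : ∀ w z : α, w ≤ z → h w ≤ h z := by
    intro w z hwz
    rcases eq_or_lt_of_le hwz with rfl | hlt
    · exact le_refl _
    · exact le_of_lt (hmono w z hlt)
  -- the interval I x is always nonempty
  have hIlow : ∀ x : α, h x + 1 ≤ b x := by
    intro x
    by_cases hne : (Z x).Nonempty
    · obtain ⟨z, hzZ, hbz⟩ := (hbmin x hne).1
      rw [hZ] at hzZ
      obtain ⟨c, hc_card, hc_chain, hx_mem, hz_mem, hc_ge, hc_le⟩ := hzZ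
      have hxz : x ≤ z := hc_le x hx_mem
      have hxz' : x ≠ z := by
        rintro rfl
        have : c ⊆ {x} := by
          intro w hw
          have := le_antisymm (hc_le w hw) (hc_ge w hw)
          simp [this]
        have := Finset.card_le_card this
        simp [hc_card] at this
        omega
      have := hmono x z (lt_of_le_of_ne hxz hxz')
      omega
    · rw [hbempty x hne]
      have := hle_q x
      omega
  -- the key combinatorial lemma: if x ≤ y fails, z ∈ Z x, then h y ≤ h z + s - 2
  have key : ∀ x y : α, ¬ x ≤ y → ∀ z ∈ Z x, h z + s ≤ h y + 1 → False := by
    intro x y hxy z hzZ hbig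
    rw [hZ] at hzZ
    obtain ⟨A, hA_card, hA_chain, hxA, hzA, hA_ge, hA_le⟩ := hzZ
    obtain ⟨C, hC_card, hC_chain, hyC, hC_le⟩ := (hh y).1
    have hz1 : 1 ≤ h z := hpos z
    -- heights are injective on the chain C
    have hCinj : Set.InjOn h (C : Set α) := by
      intro w hw w' hw' hww'
      by_contra hne
      rcases hC_chain hw hw' hne with hle | hle
      · have := hmono w w' (lt_of_le_of_ne hle hne)
        omega
      · have := hmono w' w (lt_of_le_of_ne hle (Ne.symm hne))
        omega
    -- the image of C under h is exactly Icc 1 (h y)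
    have himg : C.image h = Finset.Icc 1 (h y) := by
      apply Finset.eq_of_subset_of_card_le
      · intro k hk
        obtain ⟨w, hw, rfl⟩ := Finset.mem_image.mp hk
        exact Finset.mem_Icc.mpr ⟨hpos w, hmono' w y (hC_le w hw)⟩
      · rw [Finset.card_image_of_injOn hCinj, hC_card, Nat.card_Icc]
        omega
    set B := C.filter (fun w => h y + 1 ≤ h w + s) with hB_def
    have hB_sub : B ⊆ C := Finset.filter_subset _ _
    have hBimg : B.image h = Finset.Icc (h y + 1 - s) (h y) := by
      ext k
      simp only [hB_def, Finset.mem_image, Finset.mem_filter, Finset.mem_Icc]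
      constructor
      · rintro ⟨w, ⟨hwC, hw⟩, rfl⟩
        have : h w ∈ Finset.Icc 1 (h y) := himg ▸ Finset.mem_image_of_mem h hwC
        rw [Finset.mem_Icc] at this
        omega
      · rintro ⟨hk1, hk2⟩
        have hk : k ∈ Finset.Icc 1 (h y) := Finset.mem_Icc.mpr ⟨by omega, hk2⟩
        rw [← himg, Finset.mem_image] at hk
        obtain ⟨w, hwC, rfl⟩ := hk
        exact ⟨w, ⟨hwC, by omega⟩, rfl⟩
    have hB_card : B.card = s := by
      have := Finset.card_image_of_injOn (hCinj.mono (by exact_mod_cast hB_sub))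
      rw [hBimg, Nat.card_Icc] at this
      omega
    -- every element of A is incomparable with every element of B
    have hincomp : ∀ a ∈ A, ∀ w ∈ B, ¬ a ≤ w ∧ ¬ w ≤ a := by
      intro a ha w hw
      have hwC : w ∈ C := hB_sub hw
      have hwy : w ≤ y := hC_le w hwC
      have hwh : h y + 1 ≤ h w + s := (Finset.mem_filter.mp hw).2
      constructor
      · intro haw
        exact hxy (((hA_ge a ha).trans haw).trans hwy)
      · intro hwa
        have hwz : w ≤ z := hwa.trans (hA_le a ha)
        have hzw : h z ≤ h w := by omega
        rcases eq_or_lt_of_le hwz with rfl | hlt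
        · exact hxy (le_trans (hA_ge _ hzA) hwy)
        · have := hmono w z hlt
          omega
    -- A and B are disjoint
    have hdisj : Disjoint A B := by
      rw [Finset.disjoint_left]
      intro v hvA hvB
      exact (hincomp v hvA v hvB).1 (le_refl v)
    exact hfree ⟨A, B, hA_card, hB_card, hdisj, hA_chain,
      hC_chain.mono (by exact_mod_cast hB_sub), hincomp⟩
  -- main gap lemma
  have gap : ∀ u v : α, ¬ u ≤ v → ¬ v ≤ u → b u - 1 < h v →
      Set.ncard {k : ℕ |
        ((∀ a ∈ Finset.Icc (h u) (b u - 1), a < k) ∧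
          (∀ c ∈ Finset.Icc (h v) (b v - 1), k < c)) ∨
        ((∀ c ∈ Finset.Icc (h v) (b v - 1), c < k) ∧
          (∀ a ∈ Finset.Icc (h u) (b u - 1), k < a))} ≤ s - 2 := by
    intro u v huv hvu hlt
    have hIu : h u + 1 ≤ b u := hIlow u
    have hIv : h v + 1 ≤ b v := hIlow v
    have hu1 : 1 ≤ h u := hpos u
    have hv1 : 1 ≤ h v := hpos v
    -- Z u is nonempty
    have hZu : (Z u).Nonempty := by
      by_contra hne
      have := hbempty u hne
      have := hle_q v
      omega
    obtain ⟨z, hzZ, hbz⟩ := (hbmin u hZu).1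
    have hbound : h v + 1 < h z + s := by
      by_contra hc
      exact key u v huv z hzZ (by omega)
    rw [hbz] at hbound
    have hset : {k : ℕ |
        ((∀ a ∈ Finset.Icc (h u) (b u - 1), a < k) ∧
          (∀ c ∈ Finset.Icc (h v) (b v - 1), k < c)) ∨
        ((∀ c ∈ Finset.Icc (h v) (b v - 1), c < k) ∧
          (∀ a ∈ Finset.Icc (h u) (b u - 1), k < a))} = ↑(Finset.Ico (b u) (h v)) := by
      ext k
      simp only [Set.mem_setOf_eq, Finset.coe_Ico, Set.mem_Ico, Finset.mem_Icc]
      constructor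
      · rintro (⟨h1, h2⟩ | ⟨h1, h2⟩)
        · have e1 := h1 (b u - 1) ⟨by omega, le_refl _⟩
          have e2 := h2 (h v) ⟨le_refl _, by omega⟩
          omega
        · have e1 := h1 (h v) ⟨le_refl _, by omega⟩
          have e2 := h2 (h u) ⟨le_refl _, by omega⟩
          omega
      · rintro ⟨h1, h2⟩
        left
        exact ⟨fun a ha => by omega, fun c hc => by omega⟩
    rw [hset, Set.ncard_coe_finset, Nat.card_Ico]
    omega
  -- conclusion
  intro x y hxy hyx
  by_cases hint : (Finset.Icc (h x) (b x - 1) ∩ Finset.Icc (h y) (b y - 1)).Nonempty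
  · exact Or.inl hint
  right
  have hIx : h x + 1 ≤ b x := hIlow x
  have hIy : h y + 1 ≤ b y := hIlow y
  have hcases : b x - 1 < h y ∨ b y - 1 < h x := by
    by_contra hc
    push_neg at hc
    refine hint ⟨max (h x) (h y), ?_⟩
    simp only [Finset.mem_inter, Finset.mem_Icc]
    omega
  rcases hcases with h1 | h2
  · exact gap x y hxy hyx h1
  · have := gap y x hyx hxy h2
    have hswap : {k : ℕ |
        ((∀ a ∈ Finset.Icc (h x) (b x - 1), a < k) ∧
          (∀ c ∈ Finset.Icc (h y) (b y - 1), k < c)) ∨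
        ((∀ c ∈ Finset.Icc (h y) (b y - 1), c < k) ∧
          (∀ a ∈ Finset.Icc (h x) (b x - 1), k < a))} = {k : ℕ |
        ((∀ a ∈ Finset.Icc (h y) (b y - 1), a < k) ∧
          (∀ c ∈ Finset.Icc (h x) (b x - 1), k < c)) ∨
        ((∀ c ∈ Finset.Icc (h x) (b x - 1), c < k) ∧
          (∀ a ∈ Finset.Icc (h y) (b y - 1), k < a))} := by
      ext k
      simp only [Set.mem_setOf_eq]
      tauto
    rw [hswap]
    exact this
end
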